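/- arXiv:1605.05121 — 9 statements merged into one kernel-verified Lean document; each statement's English description precedes it below -/
import Mathlib

section
/- If C is a finite set of points in R^d in strictly convex position (every point of C is a vertex of conv(C)) and T is a finite nonempty set of translation vectors, then for each y in C there exists t in T such that x = y + t lies in exactly one translate C + t' with t' in T (i.e., x is a lonely point of C + T). -/
/-- lonely point lemma (existence for each point of `C`). -/
theorem lonely_point_exists {d : ℕ} (C T : Finset (EuclideanSpace ℝ (Fin d)))
    (hC : ∀ y ∈ C, y ∉ convexHull ℝ ((C : Set (EuclideanSpace ℝ (Fin d))) \ {y}))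
    (hT : T.Nonempty) :
    ∀ y ∈ C, ∃ t ∈ T, ∃! t' : EuclideanSpace ℝ (Fin d),
      t' ∈ T ∧ ∃ c ∈ C, y + t = c + t' := by
  intro y hy
  -- separate y from the hull of C \ {y}
  classical
  have hclosed : IsClosed (convexHull ℝ ((C : Set (EuclideanSpace ℝ (Fin d))) \ {y})) := by
    have h : ((C : Set (EuclideanSpace ℝ (Fin d))) \ {y}) = ((C.erase y : Finset _) : Set _) := by
      simp [Finset.coe_erase]
    rw [h]
    exact ((C.erase y).finite_toSet.isCompact_convexHull (𝕜 := ℝ)).isClosed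
  obtain ⟨f, u, hfu, huy⟩ :=
    geometric_hahn_banach_closed_point (convex_convexHull ℝ _) hclosed (hC y hy)
  -- pick t maximizing f
  obtain ⟨t, ht, htmax⟩ := T.exists_max_image f hT
  refine ⟨t, ht, t, ⟨ht, y, hy, rfl⟩, ?_⟩
  rintro t' ⟨ht', c, hc, heq⟩
  have hcy : c = y := by
    by_contra hne
    have hcmem : c ∈ convexHull ℝ ((C : Set (EuclideanSpace ℝ (Fin d))) \ {y}) :=
      subset_convexHull ℝ _ ⟨hc, hne⟩
    have h1 : f c < f y := lt_trans (hfu c hcmem) huy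
    have h2 : f t' ≤ f t := htmax t' ht'
    have : f y + f t = f c + f t' := by
      have := congrArg f heq
      simpa [map_add] using this
    linarith
  subst hcy
  exact (add_right_injective c heq).symm
end

section
/- For a finite set C ⊂ R^d in strictly convex position with |C| = k, and any finite nonempty set T of translation vectors, the set C + T contains at least k lonely points. -/
/-- `C + T` contains at least `|C|` lonely points. -/
theorem card_lonely_points {d : ℕ} (C T : Finset (EuclideanSpace ℝ (Fin d)))
    (hC : ∀ y ∈ C, y ∉ convexHull ℝ ((C : Set (EuclideanSpace ℝ (Fin d))) \ {y}))
    (hT : T.Nonempty) :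
    C.card ≤ {x : EuclideanSpace ℝ (Fin d) |
      ∃! t : EuclideanSpace ℝ (Fin d), t ∈ T ∧ x - t ∈ C}.ncard := by
  classical
  set L : Set (EuclideanSpace ℝ (Fin d)) := {x | ∃! t, t ∈ T ∧ x - t ∈ C} with hLdef
  -- L is finite since it is contained in C + T
  have hLfin : L.Finite := by
    apply (C.finite_toSet.add T.finite_toSet).subset
    rintro x ⟨t, ⟨htT, htC⟩, -⟩
    exact ⟨x - t, htC, t, htT, by module⟩
  -- strict separation of each point of C
  have hsep : ∀ c ∈ C, ∃ f : EuclideanSpace ℝ (Fin d) →L[ℝ] ℝ,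
      ∀ c' ∈ C, c' ≠ c → f c' < f c := by
    intro c hc
    have hfin : ((C : Set (EuclideanSpace ℝ (Fin d))) \ {c}).Finite :=
      C.finite_toSet.subset Set.diff_subset
    obtain ⟨f, u, hub, hfu⟩ :=
      geometric_hahn_banach_closed_point (convex_convexHull ℝ _)
        (hfin.isCompact_convexHull ℝ).isClosed (hC c hc)
    exact ⟨f, fun c' hc' hne =>
      lt_trans (hub _ (subset_convexHull ℝ _ ⟨hc', hne⟩)) hfu⟩
  choose f hf using hsep
  have hmax : ∀ c (hc : c ∈ C), ∃ t ∈ T, ∀ t' ∈ T, f c hc t' ≤ f c hc t :=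
    fun c hc => T.exists_max_image (f c hc) hT
  choose t ht htmax using hmax
  -- the chosen translate produces a lonely point
  have hlonely : ∀ c (hc : c ∈ C), c + t c hc ∈ L := by
    intro c hc
    refine ⟨t c hc, ⟨ht c hc, by simpa using hc⟩, ?_⟩
    rintro t' ⟨ht', hmem⟩
    rcases eq_or_ne (c + t c hc - t') c with heq | hne'
    · rw [sub_eq_iff_eq_add] at heq
      exact (add_left_cancel heq).symm
    · exfalso
      have h2 : f c hc t' ≤ f c hc (t c hc) := htmax c hc t' ht'
      have h1 : f c hc (c + t c hc - t') = f c hc c + f c hc (t c hc) - f c hc t' := by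
        simp [map_sub, map_add]
      have hge : f c hc c ≤ f c hc (c + t c hc - t') := by rw [h1]; linarith
      exact absurd hge (not_le.2 (hf c hc _ hmem hne'))
  -- the injection
  set g : EuclideanSpace ℝ (Fin d) → EuclideanSpace ℝ (Fin d) :=
    fun c => if hc : c ∈ C then c + t c hc else c with hg
  have hgL : ∀ c ∈ (C : Set (EuclideanSpace ℝ (Fin d))), g c ∈ L := by
    intro c hc
    have hc' : c ∈ C := hc
    simp only [hg, dif_pos hc']
    exact hlonely c hc'
  have hinj : Set.InjOn g (C : Set (EuclideanSpace ℝ (Fin d))) := by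
    intro c1 hc1 c2 hc2 heq
    have hc1' : c1 ∈ C := hc1
    have hc2' : c2 ∈ C := hc2
    simp only [hg, dif_pos hc1', dif_pos hc2'] at heq
    obtain ⟨tu, -, huniq⟩ := hlonely c1 hc1'
    have e1 : t c1 hc1' = tu := huniq _ ⟨ht c1 hc1', by simpa using hc1'⟩
    have e2 : t c2 hc2' = tu := by
      refine huniq _ ⟨ht c2 hc2', ?_⟩
      rw [heq]
      simpa using hc2'
    have : c1 + t c1 hc1' = c2 + t c1 hc1' := by rw [heq, e1, e2]
    exact add_right_cancel this
  calc C.card = (C : Set (EuclideanSpace ℝ (Fin d))).ncard := (Set.ncard_coe_finset C).symm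
    _ ≤ L.ncard := Set.ncard_le_ncard_of_injOn g hgL hinj hLfin
end

section
/- If m unit vectors in R^n satisfy 2^m > (e(m/n + 2)√(n+1))^n, then they form a selectively balancing set. -/
open Finset

lemma aux_pow_le_factorial_mul_exp (n : ℕ) : (n:ℝ)^n ≤ ((Nat.factorial n : ℕ):ℝ) * Real.exp 1 ^ n := by
  induction n with
  | zero => simp
  | succ k ih =>
    have hstep : ((k:ℝ)+1)^k ≤ (k:ℝ)^k * Real.exp 1 := by
      rcases Nat.eq_zero_or_pos k with h0|h0
      · subst h0
        simpa using (by nlinarith [Real.exp_one_gt_d9] : (1:ℝ) ≤ Real.exp 1)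
      · have hkpos : (0:ℝ) < k := by exact_mod_cast h0
        have h1 : (1 + 1/(k:ℝ)) ≤ Real.exp (1/k) := by
          have := Real.add_one_le_exp (1/(k:ℝ)); linarith
        have h2 : ((k:ℝ) * (1 + 1/k))^k ≤ ((k:ℝ) * Real.exp (1/k))^k := by
          apply pow_le_pow_left₀ (by positivity)
          exact mul_le_mul_of_nonneg_left h1 hkpos.le
        have h3 : (k:ℝ) * (1 + 1/k) = (k:ℝ) + 1 := by field_simp
        have h4 : ((k:ℝ) * Real.exp (1/k))^k = (k:ℝ)^k * Real.exp 1 := by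
          rw [mul_pow, ← Real.exp_nat_mul]
          congr 2
          field_simp
        rw [h3, h4] at h2
        exact h2
    have he : (0:ℝ) < Real.exp 1 := Real.exp_pos 1
    have hk1 : (0:ℝ) ≤ (k:ℝ)+1 := by positivity
    calc ((k+1:ℕ):ℝ)^(k+1) = ((k:ℝ)+1) * ((k:ℝ)+1)^k := by push_cast; ring
      _ ≤ ((k:ℝ)+1) * ((k:ℝ)^k * Real.exp 1) := by
          exact mul_le_mul_of_nonneg_left hstep hk1
      _ ≤ ((k:ℝ)+1) * (((Nat.factorial k : ℕ):ℝ) * Real.exp 1 ^ k * Real.exp 1) := by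
          apply mul_le_mul_of_nonneg_left _ hk1
          exact mul_le_mul_of_nonneg_right (ih) he.le
      _ = ((Nat.factorial (k+1) : ℕ):ℝ) * Real.exp 1 ^ (k+1) := by
          rw [Nat.factorial_succ]; push_cast; ring

lemma aux_choose_le (N n : ℕ) (hn : 0 < n) :
    ((N.choose n : ℕ):ℝ) ≤ (Real.exp 1 * N / n)^n := by
  have h1 : ((N.choose n : ℕ):ℝ) ≤ (N^n : ℝ) / (Nat.factorial n) := Nat.choose_le_pow_div n N
  have hfac : (0:ℝ) < (Nat.factorial n : ℕ) := by exact_mod_cast n.factorial_pos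
  have hnn : (0:ℝ) < (n:ℝ)^n := by positivity
  have h2 : (Real.exp 1 * N / n)^n = (N:ℝ)^n * Real.exp 1 ^n / (n:ℝ)^n := by
    rw [div_pow, mul_pow]; ring
  rw [h2]
  refine h1.trans ?_
  rw [div_le_div_iff₀ hfac hnn]
  have := aux_pow_le_factorial_mul_exp n
  have hN : (0:ℝ) ≤ (N:ℝ)^n := by positivity
  calc (N:ℝ)^n * (n:ℝ)^n ≤ (N:ℝ)^n * ((Nat.factorial n : ℕ) * Real.exp 1 ^ n) := by
        exact mul_le_mul_of_nonneg_left this hN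
    _ = (N:ℝ)^n * Real.exp 1^n * (Nat.factorial n : ℕ) := by ring
open Finset

lemma aux_card_sb (n M : ℕ) :
    ((Finset.univ : Finset (Fin n → Fin (M+1))).filter
      (fun b => ∑ i, (b i : ℕ) ≤ M)).card ≤ (M+n).choose n := by
  classical
  have e1 : n + 1 + M - 1 = M + n := by omega
  have e2 : (M+n).choose M = (M+n).choose n := by
    rw [← Nat.choose_symm (Nat.le_add_right M n)]; congr 1; omega
  set φ : (Fin n → Fin (M+1)) → Multiset (Fin (n+1)) := fun b =>
    (∑ i : Fin n, Multiset.replicate ((b i : ℕ)) i.succ) +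
      Multiset.replicate (M - ∑ i, (b i : ℕ)) 0 with hφ
  have hcard : ∀ b, (∑ i, ((b i : ℕ))) ≤ M → Multiset.card (φ b) = M := by
    intro b hb
    have hcs : ∀ s : Finset (Fin n), Multiset.card (∑ i ∈ s, Multiset.replicate ((b i : ℕ)) i.succ)
        = ∑ i ∈ s, (b i : ℕ) := by
      intro s
      induction s using Finset.cons_induction with
      | empty => simp
      | cons a s ha ih => simp [Finset.sum_cons, ih]
    simp only [hφ, Multiset.card_add, Multiset.card_replicate, hcs]
    omega
  have hcount : ∀ b (j : Fin n), Multiset.count j.succ (φ b) = (b j : ℕ) := by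
    intro b j
    simp only [hφ, Multiset.count_add, Multiset.count_sum']
    rw [Multiset.count_replicate]
    have h0 : (if (0 : Fin (n+1)) = j.succ then M - ∑ i, (b i : ℕ) else 0) = 0 := by
      simp [(Fin.succ_ne_zero j).symm]
    rw [h0, add_zero]
    rw [Finset.sum_eq_single j]
    · simp [Multiset.count_replicate]
    · intro i _ hij
      have hne : ¬ ((i.succ : Fin (n+1)) = j.succ) := fun hc => hij (Fin.succ_inj.mp hc)
      rw [Multiset.count_replicate, if_neg hne]
    · simp
  set t : Finset (Multiset (Fin (n+1))) :=
    Finset.univ.image (fun s : Sym (Fin (n+1)) M => (s : Multiset (Fin (n+1)))) with ht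
  have h1 : ((Finset.univ : Finset (Fin n → Fin (M+1))).filter
      (fun b => ∑ i, (b i : ℕ) ≤ M)).card ≤ t.card := by
    apply Finset.card_le_card_of_injOn φ
    · intro b hb
      rw [Finset.mem_coe, Finset.mem_filter] at hb
      rw [Finset.mem_coe, ht, Finset.mem_image]
      exact ⟨⟨φ b, hcard b hb.2⟩, Finset.mem_univ _, rfl⟩
    · intro b hb b' hb' heq
      funext j
      have := hcount b j
      rw [heq, hcount b' j] at this
      exact Fin.ext this.symm
  have h2 : t.card ≤ Fintype.card (Sym (Fin (n+1)) M) := Finset.card_image_le.trans (by simp)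
  have h3 : Fintype.card (Sym (Fin (n+1)) M) = (M+n).choose n := by
    rw [Sym.card_sym_eq_choose, Fintype.card_fin, e1, e2]
  exact h1.trans (h2.trans (le_of_eq h3))

lemma aux_sqrt2_lb : (1.414:ℝ) ≤ Real.sqrt 2 := by
  nlinarith [Real.sq_sqrt (show (0:ℝ) ≤ 2 by norm_num), Real.sqrt_nonneg 2]

lemma aux_small (n m : ℕ) (hn : 0 < n) (hm : (m:ℝ) ≤ 4*n) :
    (2:ℝ)^m ≤ (Real.exp 1 * ((m : ℝ) / n + 2) * Real.sqrt (n + 1)) ^ n := by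
  have hn0 : (0:ℝ) < n := by exact_mod_cast hn
  set x : ℝ := (m:ℝ)/n with hx
  have hx0 : 0 ≤ x := by positivity
  have hx4 : x ≤ 4 := by rw [hx, div_le_iff₀ hn0]; linarith
  have h16 : Real.exp (4 * Real.log 2) = 16 := by
    rw [mul_comm, Real.exp_mul, Real.exp_log (by norm_num : (0:ℝ) < 2)]
    rw [show (4:ℝ) = ((4:ℕ):ℝ) by norm_num, Real.rpow_natCast]
    norm_num
  have hchord : Real.exp (x * Real.log 2) ≤ 1 + (15/4)*x := by
    have hc := convexOn_exp.2 (Set.mem_univ (0:ℝ)) (Set.mem_univ (4 * Real.log 2))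
      (by linarith : (0:ℝ) ≤ 1 - x/4) (by linarith : (0:ℝ) ≤ x/4) (by ring)
    simp only [smul_eq_mul] at hc
    rw [Real.exp_zero, h16] at hc
    have harg : (1 - x/4) * 0 + x/4 * (4 * Real.log 2) = x * Real.log 2 := by ring
    rw [harg] at hc
    linarith
  have hsqrt2 : Real.sqrt 2 ≤ Real.sqrt ((n:ℝ)+1) := by
    apply Real.sqrt_le_sqrt
    have : (1:ℝ) ≤ n := by exact_mod_cast hn
    linarith
  have hbase : 1 + (15/4)*x ≤ Real.exp 1 * (x + 2) * Real.sqrt ((n:ℝ)+1) := by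
    have he : (2.7182818283:ℝ) < Real.exp 1 := Real.exp_one_gt_d9
    have h2 : (3.84:ℝ) ≤ Real.exp 1 * Real.sqrt 2 := by
      nlinarith [aux_sqrt2_lb, he, Real.sqrt_nonneg (2:ℝ)]
    have h3 : (3.84:ℝ)*(x+2) ≤ (Real.exp 1 * Real.sqrt 2)*(x+2) :=
      mul_le_mul_of_nonneg_right h2 (by linarith)
    have h1 : 1 + (15/4)*x ≤ Real.exp 1 * (x + 2) * Real.sqrt 2 := by nlinarith [h3]
    refine h1.trans ?_
    apply mul_le_mul_of_nonneg_left hsqrt2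
    positivity
  have hrw : (2:ℝ)^m = (Real.exp (x * Real.log 2))^n := by
    rw [← Real.exp_nat_mul, hx,
      show (n:ℝ) * ((m:ℝ)/n * Real.log 2) = (m:ℝ) * Real.log 2 by field_simp]
    rw [mul_comm ((m:ℝ)) (Real.log 2), Real.exp_mul,
      Real.exp_log (by norm_num : (0:ℝ) < 2), Real.rpow_natCast]
  rw [hrw]
  apply pow_le_pow_left₀ (Real.exp_pos _).le
  exact hchord.trans hbase

lemma aux_big (n m : ℕ) (hn : 0 < n) (hm : 4*(n:ℝ) ≤ m) :
    2*Real.sqrt m + 2 ≤ (3/4) * (((m:ℝ)/n + 2) * Real.sqrt ((n:ℝ)+1)) := by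
  have hn0 : (0:ℝ) < n := by exact_mod_cast hn
  set a := Real.sqrt n with hadef
  set b := Real.sqrt ((n:ℝ)+1) with hbdef
  set c := Real.sqrt m with hcdef
  have ha2 : a^2 = n := Real.sq_sqrt hn0.le
  have hb2 : b^2 = (n:ℝ)+1 := Real.sq_sqrt (by linarith)
  have hc2 : c^2 = m := Real.sq_sqrt (by positivity)
  have ha0 : 0 ≤ a := Real.sqrt_nonneg _
  have hb0 : 0 ≤ b := Real.sqrt_nonneg _
  have hc0 : 0 ≤ c := Real.sqrt_nonneg _
  have hca : 2*a ≤ c := by nlinarith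
  have hb9 : 8*a + 4 ≤ 9*b := by nlinarith [sq_nonneg (17*a - 32)]
  have hpos : 0 ≤ 2*a*(c-a) + c + 2*a := by nlinarith
  have h1 : 0 ≤ (c - 2*a) * (2*a*(c-a) + c + 2*a) :=
    mul_nonneg (by linarith) hpos
  have hq : (c^2 + 2*a^2) * (8*a+4) ≤ (c^2 + 2*a^2) * (9*b) :=
    mul_le_mul_of_nonneg_left hb9 (by positivity)
  have key : (2*c+2) * (n:ℝ) ≤ (3/4) * (((m:ℝ) + 2*n) * b) := by
    rw [← ha2, ← hc2]
    nlinarith [hq, h1]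
  have hrwm : ((m:ℝ)/n + 2) = ((m:ℝ) + 2*n)/n := by field_simp
  rw [hrwm]
  rw [show (3:ℝ)/4 * (((m:ℝ) + 2*n)/n * b) = ((3/4) * (((m:ℝ) + 2*n) * b))/n by ring]
  rw [le_div_iff₀ hn0]
  linarith [key]

lemma aux_sum_norm_sq {n m : ℕ} (u : Fin m → EuclideanSpace ℝ (Fin n))
    (hu : ∀ i, ‖u i‖ = 1) :
    ∑ σ : Fin m → Bool, ‖∑ i, (if σ i then (1:ℝ) else -1) • u i‖^2 = 2^m * m := by
  classical
  set es : (Fin m → Bool) → Fin m → ℝ := fun σ i => if σ i then (1:ℝ) else -1 with hes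
  have hT : ∀ σ : Fin m → Bool, ‖∑ i, es σ i • u i‖^2
      = ∑ i, ∑ j, es σ i * es σ j * (inner ℝ (u i) (u j) : ℝ) := by
    intro σ
    rw [← real_inner_self_eq_norm_sq, sum_inner]
    refine Finset.sum_congr rfl fun i _ => ?_
    rw [inner_sum]
    refine Finset.sum_congr rfl fun j _ => ?_
    rw [real_inner_smul_left, real_inner_smul_right]; ring
  have hswap : ∑ σ : Fin m → Bool, ‖∑ i, es σ i • u i‖^2
      = ∑ i, ∑ j, (∑ σ : Fin m → Bool, es σ i * es σ j) * (inner ℝ (u i) (u j) : ℝ) := by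
    simp_rw [hT]
    rw [Finset.sum_comm]
    refine Finset.sum_congr rfl fun i _ => ?_
    rw [Finset.sum_comm]
    refine Finset.sum_congr rfl fun j _ => ?_
    rw [Finset.sum_mul]
  have hdiag : ∀ i : Fin m, (∑ σ : Fin m → Bool, es σ i * es σ i) = 2^m := by
    intro i
    have : ∀ σ : Fin m → Bool, es σ i * es σ i = 1 := by
      intro σ; by_cases hσ : σ i <;> simp [hes, hσ]
    rw [Finset.sum_congr rfl fun σ _ => this σ]
    simp [Finset.card_univ]
  have hoff : ∀ i j : Fin m, i ≠ j → (∑ σ : Fin m → Bool, es σ i * es σ j) = 0 := by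
    intro i j hij
    set ι : (Fin m → Bool) → (Fin m → Bool) := fun σ => Function.update σ i (!(σ i)) with hι
    have hinv : Function.Involutive ι := by
      intro σ; funext k
      by_cases hk : k = i
      · subst hk; simp [hι]
      · simp [hι, Function.update_of_ne hk]
    have hterm : ∀ σ, es (ι σ) i * es (ι σ) j = -(es σ i * es σ j) := by
      intro σ
      have h1 : es (ι σ) i = -(es σ i) := by
        by_cases hσ : σ i <;> simp [hι, hes, Function.update_self, hσ]
      have h2 : es (ι σ) j = es σ j := by
        simp [hι, hes, Function.update_of_ne (Ne.symm hij)]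
      rw [h1, h2]; ring
    have hb := Fintype.sum_bijective ι hinv.bijective
      (fun σ => es (ι σ) i * es (ι σ) j) (fun σ => es σ i * es σ j) (fun σ => rfl)
    rw [Finset.sum_congr rfl fun σ _ => hterm σ] at hb
    rw [Finset.sum_neg_distrib] at hb
    linarith [hb]
  have hfinal : ∑ i : Fin m, ∑ j : Fin m,
      (∑ σ : Fin m → Bool, es σ i * es σ j) * (inner ℝ (u i) (u j) : ℝ) = 2^m * m := by
    have : ∀ i : Fin m, (∑ j, (∑ σ : Fin m → Bool, es σ i * es σ j) * (inner ℝ (u i) (u j) : ℝ))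
        = 2^m := by
      intro i
      rw [Finset.sum_eq_single i]
      · rw [hdiag i, real_inner_self_eq_norm_sq, hu i]; norm_num
      · intro j _ hji
        rw [hoff i j (Ne.symm hji), zero_mul]
      · simp
    rw [Finset.sum_congr rfl fun i _ => this i]
    simp [Finset.card_univ, mul_comm]
  rw [hswap, hfinal]

def SelectivelyBalancing {n m : ℕ} (u : Fin m → EuclideanSpace ℝ (Fin n)) : Prop :=
  ∃ ε : Fin m → ℝ, (∀ i, ε i = -1 ∨ ε i = 0 ∨ ε i = 1) ∧ ε ≠ 0 ∧
    ‖∑ i, ε i • u i‖ < 1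

/-- if `2^m > (e(m/n + 2)√(n+1))^n` then any `m` unit vectors in
`ℝ^n` are selectively balancing. -/
theorem selBal_of_counting {n m : ℕ} (hn : 0 < n)
    (h : (Real.exp 1 * ((m : ℝ) / n + 2) * Real.sqrt (n + 1)) ^ n < 2 ^ m)
    (u : Fin m → EuclideanSpace ℝ (Fin n)) (hu : ∀ i, ‖u i‖ = 1) :
    SelectivelyBalancing u := by
  classical
  by_cases hcase : (m:ℝ) ≤ 4*n
  · exact absurd h (not_lt.2 (aux_small n m hn hcase))
  push_neg at hcase
  have hn0 : (0:ℝ) < n := by exact_mod_cast hn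
  have hm4 : 4*(n:ℝ) ≤ m := hcase.le
  have hm0 : (0:ℝ) < m := by nlinarith
  set es : (Fin m → Bool) → Fin m → ℝ := fun σ i => if σ i then (1:ℝ) else -1 with hes
  set T : (Fin m → Bool) → EuclideanSpace ℝ (Fin n) := fun σ => ∑ i, es σ i • u i with hTdef
  have hsum : ∑ σ : Fin m → Bool, ‖T σ‖^2 = 2^m * m := aux_sum_norm_sq u hu
  have hnormsq : ∀ σ : Fin m → Bool, ∑ j, (T σ j)^2 = ‖T σ‖^2 := by
    intro σ
    rw [EuclideanSpace.norm_eq, Real.sq_sqrt (by positivity)]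
    refine Finset.sum_congr rfl fun j _ => ?_
    rw [Real.norm_eq_abs, sq_abs]
  set A : Finset (Fin m → Bool) := Finset.univ.filter (fun σ => ‖T σ‖^2 ≤ 4*(m:ℝ)) with hA
  have hAcard : (3:ℝ)/4 * 2^m ≤ A.card := by
    set Bset := Finset.univ.filter (fun σ : Fin m → Bool => ¬ (‖T σ‖^2 ≤ 4*(m:ℝ))) with hB
    have hsplit : A.card + Bset.card = 2^m := by
      rw [hA, hB, Finset.card_filter_add_card_filter_not, Finset.card_univ]
      simp
    have hBsum : (Bset.card : ℝ) * (4*m) ≤ 2^m * m := by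
      calc (Bset.card : ℝ) * (4*m) = ∑ _σ ∈ Bset, (4*(m:ℝ)) := by
            rw [Finset.sum_const, nsmul_eq_mul]
        _ ≤ ∑ σ ∈ Bset, ‖T σ‖^2 := Finset.sum_le_sum (fun σ hσ => by
            rw [hB, Finset.mem_filter] at hσ; exact (not_le.mp hσ.2).le)
        _ ≤ ∑ σ : Fin m → Bool, ‖T σ‖^2 :=
            Finset.sum_le_sum_of_subset_of_nonneg (Finset.subset_univ _)
              (fun σ _ _ => by positivity)
        _ = 2^m * m := hsum
    have hBle : (Bset.card:ℝ) ≤ 2^m/4 := by nlinarith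
    have hcast : (A.card:ℝ) + Bset.card = 2^m := by exact_mod_cast hsplit
    linarith
  set g : ℤ → ℕ := fun z => if 0 ≤ z then (2*z).toNat else (2*(-z) - 1).toNat with hg
  have hg_inj : Function.Injective g := by
    intro z w hzw
    simp only [hg] at hzw
    split_ifs at hzw <;> omega
  set f : (Fin m → Bool) → Fin n → ℤ := fun σ j => ⌊(T σ j) * Real.sqrt n / 2⌋ with hf
  have hg_bound : ∀ (y : ℝ), ((g ⌊y⌋ : ℕ) : ℝ) ≤ 2*|y| + 1 := by
    intro y
    have h1 : (⌊y⌋ : ℝ) ≤ y := Int.floor_le y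
    have h2 : y < ⌊y⌋ + 1 := Int.lt_floor_add_one y
    by_cases hy : (0:ℤ) ≤ ⌊y⌋
    · simp only [hg, if_pos hy]
      have hnn : (0:ℤ) ≤ 2*⌊y⌋ := by omega
      rw [show (((2*⌊y⌋).toNat : ℕ) : ℝ) = ((2*⌊y⌋ : ℤ) : ℝ) by
        rw [← Int.cast_natCast, Int.toNat_of_nonneg hnn]]
      push_cast
      have h3 : (0:ℝ) ≤ (⌊y⌋:ℝ) := by exact_mod_cast hy
      have hay : y ≤ |y| := le_abs_self y
      linarith
    · simp only [hg, if_neg hy]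
      have hnn : (0:ℤ) ≤ 2*(-⌊y⌋) - 1 := by omega
      rw [show (((2*(-⌊y⌋) - 1).toNat : ℕ) : ℝ) = ((2*(-⌊y⌋) - 1 : ℤ) : ℝ) by
        rw [← Int.cast_natCast, Int.toNat_of_nonneg hnn]]
      push_cast
      have hay : -y ≤ |y| := neg_le_abs y
      linarith
  set M : ℕ := Nat.floor (2*(n:ℝ)*Real.sqrt m + n) with hM
  have hsum_g : ∀ σ ∈ A, ∑ j, g (f σ j) ≤ M := by
    intro σ hσ
    rw [hA, Finset.mem_filter] at hσ
    have hTle : ‖T σ‖ ≤ 2*Real.sqrt m := by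
      have h1 : Real.sqrt (‖T σ‖^2) ≤ Real.sqrt (4*m) := Real.sqrt_le_sqrt hσ.2
      rw [Real.sqrt_sq (norm_nonneg _)] at h1
      rw [show (4:ℝ)*m = (2*Real.sqrt m)^2 by
        rw [mul_pow, Real.sq_sqrt hm0.le]; norm_num] at h1
      rwa [Real.sqrt_sq (by positivity)] at h1
    have hl1 : ∑ j, |T σ j| ≤ Real.sqrt n * ‖T σ‖ := by
      have hcs := sq_sum_le_card_mul_sum_sq (s := (Finset.univ : Finset (Fin n)))
        (f := fun j => |T σ j|)
      have hcard : ((Finset.univ : Finset (Fin n)).card : ℝ) = n := by simp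
      have habs : ∑ j, |T σ j|^2 = ‖T σ‖^2 := by
        rw [← hnormsq σ]; exact Finset.sum_congr rfl fun j _ => sq_abs _
      have h2 : (∑ j, |T σ j|)^2 ≤ (n:ℝ) * ‖T σ‖^2 := by
        calc (∑ j, |T σ j|)^2 ≤ ((Finset.univ : Finset (Fin n)).card:ℝ) * ∑ j, |T σ j|^2 := hcs
          _ = (n:ℝ) * ‖T σ‖^2 := by rw [hcard, habs]
      have h3 : ∑ j, |T σ j| = Real.sqrt ((∑ j, |T σ j|)^2) :=
        (Real.sqrt_sq (by positivity)).symm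
      rw [h3]
      calc Real.sqrt ((∑ j, |T σ j|)^2) ≤ Real.sqrt ((n:ℝ) * ‖T σ‖^2) := Real.sqrt_le_sqrt h2
        _ = Real.sqrt n * ‖T σ‖ := by
            rw [Real.sqrt_mul (by positivity), Real.sqrt_sq (norm_nonneg _)]
    have hreal : ((∑ j, g (f σ j) : ℕ) : ℝ) ≤ 2*(n:ℝ)*Real.sqrt m + n := by
      push_cast
      have hterm : ∀ j, ((g (f σ j):ℕ):ℝ) ≤ Real.sqrt n * |T σ j| + 1 := by
        intro j
        have := hg_bound (T σ j * Real.sqrt n / 2)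
        rw [hf] at *
        have habs2 : 2*|T σ j * Real.sqrt n / 2| = Real.sqrt n * |T σ j| := by
          rw [abs_div, abs_mul, abs_of_nonneg (Real.sqrt_nonneg _),
            abs_of_nonneg (by norm_num : (0:ℝ) ≤ 2)]
          ring
        linarith [this]
      calc ∑ j, ((g (f σ j):ℕ):ℝ) ≤ ∑ j, (Real.sqrt n * |T σ j| + 1) :=
            Finset.sum_le_sum (fun j _ => hterm j)
        _ = Real.sqrt n * (∑ j, |T σ j|) + n := by
            rw [Finset.sum_add_distrib, Finset.mul_sum]
            simp
        _ ≤ Real.sqrt n * (Real.sqrt n * ‖T σ‖) + n := by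
            have := mul_le_mul_of_nonneg_left hl1 (Real.sqrt_nonneg (n:ℝ))
            linarith
        _ = (n:ℝ) * ‖T σ‖ + n := by
            rw [← mul_assoc, Real.mul_self_sqrt hn0.le]
        _ ≤ (n:ℝ) * (2*Real.sqrt m) + n := by
            have := mul_le_mul_of_nonneg_left hTle hn0.le
            linarith
        _ = 2*(n:ℝ)*Real.sqrt m + n := by ring
    exact Nat.le_floor hreal
  have hcoord_le : ∀ σ ∈ A, ∀ j, g (f σ j) ≤ M := by
    intro σ hσ j
    exact le_trans (Finset.single_le_sum (f := fun j => g (f σ j))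
      (fun _ _ => Nat.zero_le _) (Finset.mem_univ j)) (hsum_g σ hσ)
  set bfun : (Fin m → Bool) → (Fin n → Fin (M+1)) :=
    fun σ j => ⟨min (g (f σ j)) M, Nat.lt_succ_of_le (min_le_right _ _)⟩ with hbfun
  set target : Finset (Fin n → Fin (M+1)) :=
    Finset.univ.filter (fun b => ∑ j, (b j : ℕ) ≤ M) with htarget
  have hmaps : ∀ σ ∈ A, bfun σ ∈ target := by
    intro σ hσ
    rw [htarget, Finset.mem_filter]
    refine ⟨Finset.mem_univ _, ?_⟩
    calc ∑ j, ((bfun σ j : Fin (M+1)) : ℕ) = ∑ j, min (g (f σ j)) M := rfl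
      _ ≤ ∑ j, g (f σ j) := Finset.sum_le_sum fun j _ => min_le_left _ _
      _ ≤ M := hsum_g σ hσ
  have hcount : (target.card : ℝ) < A.card := by
    have h1 : (target.card : ℝ) ≤ (((M+n).choose n : ℕ) : ℝ) := by
      exact_mod_cast aux_card_sb n M
    have h2 : (((M+n).choose n : ℕ) : ℝ) ≤ (Real.exp 1 * ((M:ℝ)+n) / n)^n := by
      have := aux_choose_le (M+n) n hn
      push_cast at this ⊢
      exact this
    have hMle : ((M:ℝ)+(n:ℝ)) ≤ 2*(n:ℝ)*Real.sqrt m + 2*n := by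
      have hfl : (M:ℝ) ≤ 2*(n:ℝ)*Real.sqrt m + n :=
        Nat.floor_le (by positivity)
      linarith
    have h3 : Real.exp 1 * ((M:ℝ)+n) / n ≤ Real.exp 1 * (2*Real.sqrt m + 2) := by
      rw [div_le_iff₀ hn0]
      calc Real.exp 1 * ((M:ℝ)+n) ≤ Real.exp 1 * (2*(n:ℝ)*Real.sqrt m + 2*n) :=
            mul_le_mul_of_nonneg_left hMle (Real.exp_pos 1).le
        _ = Real.exp 1 * (2*Real.sqrt m + 2) * n := by ring
    have h4 : (Real.exp 1 * ((M:ℝ)+n) / n)^n ≤ (Real.exp 1 * (2*Real.sqrt m + 2))^n :=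
      pow_le_pow_left₀ (by positivity) h3 n
    have h5 : Real.exp 1 * (2*Real.sqrt m + 2)
        ≤ (3/4) * (Real.exp 1 * ((m:ℝ)/n + 2) * Real.sqrt ((n:ℝ)+1)) := by
      have hb := aux_big n m hn hm4
      have hb2 := mul_le_mul_of_nonneg_left hb (Real.exp_pos 1).le
      calc Real.exp 1 * (2*Real.sqrt m + 2)
          ≤ Real.exp 1 * ((3/4) * (((m:ℝ)/n + 2) * Real.sqrt ((n:ℝ)+1))) := hb2
        _ = (3/4) * (Real.exp 1 * ((m:ℝ)/n + 2) * Real.sqrt ((n:ℝ)+1)) := by ring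
    have h6 : (Real.exp 1 * (2*Real.sqrt m + 2))^n
        ≤ (3/4) * (Real.exp 1 * ((m:ℝ)/n + 2) * Real.sqrt ((n:ℝ)+1))^n := by
      calc (Real.exp 1 * (2*Real.sqrt m + 2))^n
          ≤ ((3/4) * (Real.exp 1 * ((m:ℝ)/n + 2) * Real.sqrt ((n:ℝ)+1)))^n :=
            pow_le_pow_left₀ (by positivity) h5 n
        _ = (3/4)^n * (Real.exp 1 * ((m:ℝ)/n + 2) * Real.sqrt ((n:ℝ)+1))^n := mul_pow _ _ _
        _ ≤ (3/4) * (Real.exp 1 * ((m:ℝ)/n + 2) * Real.sqrt ((n:ℝ)+1))^n := by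
            have hbase : (0:ℝ) ≤ (Real.exp 1 * ((m:ℝ)/n + 2) * Real.sqrt ((n:ℝ)+1))^n := by
              positivity
            have h34 : ((3:ℝ)/4)^n ≤ 3/4 := by
              calc ((3:ℝ)/4)^n ≤ (3/4)^1 :=
                    pow_le_pow_of_le_one (by norm_num) (by norm_num) hn
                _ = 3/4 := pow_one _
            exact mul_le_mul_of_nonneg_right h34 hbase
    have h7 : (3:ℝ)/4 * (Real.exp 1 * ((m:ℝ)/n + 2) * Real.sqrt ((n:ℝ)+1))^n < 3/4 * 2^m := by
      have hcast : ((n:ℝ)+1) = (((n:ℕ):ℝ)+1) := by norm_num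
      nlinarith [h]
    linarith [h1, h2.trans (h4.trans h6), h7, hAcard]
  have hcountN : target.card < A.card := by exact_mod_cast hcount
  obtain ⟨σ, hσA, σ', hσ'A, hne, heqb⟩ :=
    Finset.exists_ne_map_eq_of_card_lt_of_maps_to hcountN hmaps
  have hfeq : f σ = f σ' := by
    funext j
    apply hg_inj
    have e1 : min (g (f σ j)) M = g (f σ j) := min_eq_left (hcoord_le σ hσA j)
    have e2 : min (g (f σ' j)) M = g (f σ' j) := min_eq_left (hcoord_le σ' hσ'A j)
    have hj := congrFun heqb j
    have hval : min (g (f σ j)) M = min (g (f σ' j)) M := congrArg Fin.val hj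
    rw [e1, e2] at hval
    exact hval
  have hns : (0:ℝ) < Real.sqrt n := Real.sqrt_pos.mpr hn0
  have hcoord : ∀ j, |T σ j - T σ' j| < 2 / Real.sqrt n := by
    intro j
    have hflr : ⌊T σ j * Real.sqrt n / 2⌋ = ⌊T σ' j * Real.sqrt n / 2⌋ := by
      have := congrFun hfeq j
      rwa [hf] at this
    have a1 : ((⌊T σ' j * Real.sqrt n / 2⌋:ℤ):ℝ) ≤ T σ j * Real.sqrt n / 2 := by
      rw [← hflr]; exact Int.floor_le _
    have a2 : T σ j * Real.sqrt n / 2 < (⌊T σ' j * Real.sqrt n / 2⌋:ℤ) + 1 := by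
      rw [← hflr]; exact Int.lt_floor_add_one _
    have a3 : ((⌊T σ' j * Real.sqrt n / 2⌋:ℤ):ℝ) ≤ T σ' j * Real.sqrt n / 2 :=
      Int.floor_le _
    have a4 : T σ' j * Real.sqrt n / 2 < (⌊T σ' j * Real.sqrt n / 2⌋:ℤ) + 1 :=
      Int.lt_floor_add_one _
    have h1 : |T σ j * Real.sqrt n / 2 - T σ' j * Real.sqrt n / 2| < 1 :=
      abs_lt.2 ⟨by linarith, by linarith⟩
    have h2 : T σ j - T σ' j
        = (T σ j * Real.sqrt n / 2 - T σ' j * Real.sqrt n / 2) * (2 / Real.sqrt n) := by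
      field_simp
    rw [h2, abs_mul, abs_of_nonneg (by positivity : (0:ℝ) ≤ 2/Real.sqrt n)]
    calc |T σ j * Real.sqrt n / 2 - T σ' j * Real.sqrt n / 2| * (2/Real.sqrt n)
        < 1 * (2/Real.sqrt n) := mul_lt_mul_of_pos_right h1 (by positivity)
      _ = 2/Real.sqrt n := one_mul _
  have hdist : ‖T σ - T σ'‖ < 2 := by
    rw [EuclideanSpace.norm_eq]
    rw [show (2:ℝ) = Real.sqrt 4 by
      rw [show (4:ℝ) = 2^2 by norm_num, Real.sqrt_sq (by norm_num : (0:ℝ) ≤ 2)]]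
    apply Real.sqrt_lt_sqrt (by positivity)
    have hterm : ∀ j, ‖(T σ - T σ') j‖^2 < 4/(n:ℝ) := by
      intro j
      have hj : (T σ - T σ') j = T σ j - T σ' j := rfl
      rw [hj, Real.norm_eq_abs, sq_abs]
      have hc := hcoord j
      have h4 : (2/Real.sqrt n)^2 = 4/(n:ℝ) := by
        rw [div_pow, Real.sq_sqrt hn0.le]; norm_num
      obtain ⟨hc1, hc2⟩ := abs_lt.mp hc
      calc (T σ j - T σ' j)^2 < (2/Real.sqrt n)^2 := sq_lt_sq' hc1 hc2
        _ = 4/(n:ℝ) := h4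
    have hne' : (Finset.univ : Finset (Fin n)).Nonempty := by
      have : Nonempty (Fin n) := Fin.pos_iff_nonempty.mp hn
      exact Finset.univ_nonempty
    calc ∑ j, ‖(T σ - T σ') j‖^2 < ∑ _j : Fin n, (4/(n:ℝ)) :=
          Finset.sum_lt_sum_of_nonempty hne' (fun j _ => hterm j)
      _ = 4 := by
          rw [Finset.sum_const, Finset.card_univ, Fintype.card_fin, nsmul_eq_mul]
          field_simp
  refine ⟨fun i => (es σ i - es σ' i)/2, ?_, ?_, ?_⟩
  · intro i
    by_cases h1 : σ i <;> by_cases h2 : σ' i <;> norm_num [hes, h1, h2]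
  · intro h0
    obtain ⟨i, hi⟩ := Function.ne_iff.mp hne
    have hz := congrFun h0 i
    simp only [Pi.zero_apply] at hz
    by_cases h1 : σ i <;> by_cases h2 : σ' i <;>
      simp [hes, h1, h2] at hz hi <;> norm_num at hz
  · have hsmul : ∀ i : Fin m, ((es σ i - es σ' i)/2) • u i
        = (2:ℝ)⁻¹ • (es σ i • u i - es σ' i • u i) := by
      intro i
      rw [div_eq_inv_mul, mul_smul, sub_smul]
    have hsum2 : ∑ i, ((es σ i - es σ' i)/2) • u i = (2:ℝ)⁻¹ • (T σ - T σ') := by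
      rw [Finset.sum_congr rfl fun i _ => hsmul i, ← Finset.smul_sum]
      congr 1
      rw [Finset.sum_sub_distrib]
    rw [hsum2, norm_smul, Real.norm_eq_abs,
      abs_of_nonneg (by norm_num : (0:ℝ) ≤ (2:ℝ)⁻¹)]
    linarith [hdist]
end

section
/- For every constant c_1 > 1/2 there exists N such that for all n ≥ N, every set of at least c_1 · n · log₂(n) unit vectors in R^n is selectively balancing. -/
open Finset Filter MeasureTheory Metric

set_option linter.unnecessarySeqFocus false

noncomputable def sgn (b : Bool) : ℝ := if b then 1 else -1

lemma sgn_mul_self (b : Bool) : sgn b * sgn b = 1 := by cases b <;> simp [sgn]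

lemma sgn_not (b : Bool) : sgn (!b) = - sgn b := by cases b <;> simp [sgn]


lemma sum_sgn_mul {m : ℕ} (i j : Fin m) :
    ∑ σ : Fin m → Bool, sgn (σ i) * sgn (σ j) = if i = j then (2:ℝ)^m else 0 := by
  rcases eq_or_ne i j with rfl | hij
  · simp [sgn_mul_self, Finset.card_univ]
  · simp only [if_neg hij]
    have hinv : Function.Involutive (fun σ : Fin m → Bool => Function.update σ j (!(σ j))) := by
      intro σ
      funext k
      rcases eq_or_ne k j with rfl | hk
      · simp [Function.update]
      · simp [Function.update, hk]
    set e : Equiv.Perm (Fin m → Bool) := hinv.toPerm with he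
    have h := Equiv.sum_comp e (fun σ : Fin m → Bool => sgn (σ i) * sgn (σ j))
    have h2 : ∑ σ : Fin m → Bool, sgn ((e σ) i) * sgn ((e σ) j)
        = -∑ σ : Fin m → Bool, sgn (σ i) * sgn (σ j) := by
      rw [← Finset.sum_neg_distrib]
      apply Finset.sum_congr rfl
      intro σ _
      have h3 : (e σ) i = σ i := by
        simp [he, Function.Involutive.toPerm, Function.update, hij]
      have h4 : (e σ) j = !(σ j) := by
        simp [he, Function.Involutive.toPerm, Function.update]
      rw [h3, h4, sgn_not]
      ring
    rw [h2] at h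
    linarith


lemma sum_norm_sq {n m : ℕ} (u : Fin m → EuclideanSpace ℝ (Fin n)) (hu : ∀ i, ‖u i‖ = 1) :
    ∑ σ : Fin m → Bool, ‖∑ i, sgn (σ i) • u i‖ ^ 2 = 2 ^ m * m := by
  have key : ∀ σ : Fin m → Bool, ‖∑ i, sgn (σ i) • u i‖ ^ 2
      = ∑ i, ∑ j, sgn (σ i) * sgn (σ j) * (inner ℝ (u i) (u j) : ℝ) := by
    intro σ
    rw [← real_inner_self_eq_norm_sq, sum_inner]
    apply Finset.sum_congr rfl
    intro i _
    rw [inner_sum]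
    apply Finset.sum_congr rfl
    intro j _
    rw [real_inner_smul_left, real_inner_smul_right]
    ring
  calc ∑ σ : Fin m → Bool, ‖∑ i, sgn (σ i) • u i‖ ^ 2
      = ∑ σ : Fin m → Bool, ∑ i, ∑ j, sgn (σ i) * sgn (σ j) * (inner ℝ (u i) (u j) : ℝ) := by
        exact Finset.sum_congr rfl fun σ _ => key σ
    _ = ∑ i, ∑ j, ∑ σ : Fin m → Bool, sgn (σ i) * sgn (σ j) * (inner ℝ (u i) (u j) : ℝ) := by
        rw [Finset.sum_comm]
        exact Finset.sum_congr rfl fun i _ => Finset.sum_comm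
    _ = ∑ i, ∑ j, (if i = j then (2:ℝ)^m else 0) * (inner ℝ (u i) (u j) : ℝ) := by
        refine Finset.sum_congr rfl fun i _ => Finset.sum_congr rfl fun j _ => ?_
        rw [← Finset.sum_mul, sum_sgn_mul]
    _ = ∑ i : Fin m, (2:ℝ)^m * (inner ℝ (u i) (u i) : ℝ) := by
        refine Finset.sum_congr rfl fun i _ => ?_
        simp [ite_mul]
    _ = 2 ^ m * m := by
        have : ∀ i : Fin m, (inner ℝ (u i) (u i) : ℝ) = 1 := by
          intro i; rw [real_inner_self_eq_norm_sq, hu i]; norm_num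
        simp [this, hu]
        ring

lemma sb_of_close {n m : ℕ} (u : Fin m → EuclideanSpace ℝ (Fin n)) (σ σ' : Fin m → Bool)
    (hne : σ ≠ σ')
    (h : ‖(∑ i, sgn (σ i) • u i) - ∑ i, sgn (σ' i) • u i‖ < 2) :
    SelectivelyBalancing u := by
  refine ⟨fun i => (sgn (σ i) - sgn (σ' i)) / 2, ?_, ?_, ?_⟩
  · intro i
    cases hσ : σ i <;> cases hσ' : σ' i <;> simp [sgn, hσ, hσ'] <;> norm_num
  · obtain ⟨i, hi⟩ := Function.ne_iff.mp hne
    intro hz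
    have := congrFun hz i
    simp only [Pi.zero_apply, div_eq_zero_iff, sub_eq_zero] at this
    rcases this with h' | h'
    · cases hσ : σ i <;> cases hσ' : σ' i <;> rw [hσ, hσ'] at h' <;>
        first
          | (exact hi (hσ.trans hσ'.symm))
          | (simp [sgn] at h'; norm_num at h')
    · norm_num at h'
  · have heq : ∑ i, ((sgn (σ i) - sgn (σ' i)) / 2) • u i
        = (2⁻¹ : ℝ) • ((∑ i, sgn (σ i) • u i) - ∑ i, sgn (σ' i) • u i) := by
      rw [smul_sub, Finset.smul_sum, Finset.smul_sum, ← Finset.sum_sub_distrib]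
      refine Finset.sum_congr rfl fun i _ => ?_
      rw [smul_smul, smul_smul, ← sub_smul]
      congr 1
      ring
    rw [heq, norm_smul]
    simp only [norm_inv, Real.norm_ofNat]
    calc (2:ℝ)⁻¹ * ‖(∑ i, sgn (σ i) • u i) - ∑ i, sgn (σ' i) • u i‖ < 2⁻¹ * 2 := by
          apply mul_lt_mul_of_pos_left h; norm_num
      _ = 1 := by norm_num

lemma analytic (c₁ : ℝ) (hc₁ : 1 / 2 < c₁) :
    ∃ N : ℕ, 2 ≤ N ∧ ∀ n ≥ N, ∀ m : ℕ, c₁ * n * Real.logb 2 n ≤ m →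
      1 ≤ m ∧ (Real.sqrt (2 * m) + 1) ^ n < (2:ℝ) ^ (m - 1) := by
  set d : ℝ := c₁ - 1/2 with hd
  clear_value d
  have hdpos : 0 < d := by rw [hd]; linarith
  have hc₁pos : 0 < c₁ := by linarith
  have hlog : ∀ᶠ y : ℝ in atTop, Real.log y ≤ (d * Real.log 2 / c₁) * y := by
    have hε : 0 < d * Real.log 2 / c₁ := by positivity
    have h := Real.isLittleO_log_id_atTop.bound hε
    filter_upwards [h, eventually_ge_atTop (1:ℝ)] with y hy h1
    have h2 : |Real.log y| ≤ d * Real.log 2 / c₁ * |y| := by simpa using hy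
    rwa [abs_of_nonneg (Real.log_nonneg h1), abs_of_nonneg (by linarith)] at h2
  obtain ⟨y₀, hy₀⟩ := eventually_atTop.mp hlog
  set L₀ : ℝ := max (max 2 (7/d)) (y₀ / c₁ + 1) with hL₀
  have hLn : ∀ᶠ k : ℕ in atTop, L₀ ≤ Real.logb 2 k := by
    have := (Real.tendsto_logb_atTop (by norm_num : (1:ℝ) < 2)).comp
      (tendsto_natCast_atTop_atTop (R := ℝ))
    exact this.eventually_ge_atTop L₀
  obtain ⟨N₁, hN₁⟩ := eventually_atTop.mp hLn
  refine ⟨max N₁ 2, le_max_right _ _, ?_⟩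
  intro n hn m hm
  have hn2 : 2 ≤ n := le_trans (le_max_right _ _) hn
  set L : ℝ := Real.logb 2 n with hLdef
  clear_value L
  have hL : L₀ ≤ L := by rw [hLdef]; exact hN₁ n (le_trans (le_max_left _ _) hn)
  have hL2 : 2 ≤ L := le_trans (le_trans (le_max_left _ _) (le_max_left _ _)) hL
  have hL7 : 7/d ≤ L := le_trans (le_trans (le_max_right _ _) (le_max_left _ _)) hL
  have hLy : y₀ ≤ c₁ * L := by
    have h1 : y₀ / c₁ + 1 ≤ L := le_trans (le_max_right _ _) hL
    have h2 := (div_le_iff₀ hc₁pos).mp (by linarith : y₀ / c₁ ≤ L)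
    linarith
  have hnpos : (0:ℝ) < n := by positivity
  have hn1 : (2:ℝ) ≤ n := by exact_mod_cast hn2
  have hcLpos : 0 < c₁ * L := by positivity
  -- (P3)
  have hP3 : 3 < d * L - (1/2) * Real.logb 2 (c₁ * L) := by
    have h1 : Real.log (c₁ * L) ≤ d * Real.log 2 / c₁ * (c₁ * L) := hy₀ _ hLy
    have h2 : Real.logb 2 (c₁ * L) ≤ d * L := by
      rw [Real.logb, div_le_iff₀ (Real.log_pos one_lt_two)]
      calc Real.log (c₁ * L) ≤ d * Real.log 2 / c₁ * (c₁ * L) := h1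
        _ = d * L * Real.log 2 := by field_simp
    have h3 : 3 < d * L / 2 := by
      have := (div_le_iff₀ hdpos).mp hL7
      nlinarith
    nlinarith
  set M₀ : ℝ := c₁ * n * L with hM₀
  clear_value M₀
  have hM₀n : (n:ℝ) ≤ M₀ := by
    have h1 : 1 ≤ c₁ * L := by nlinarith
    calc (n:ℝ) = 1 * n := by ring
      _ ≤ (c₁ * L) * n := mul_le_mul_of_nonneg_right h1 (le_of_lt hnpos)
      _ = M₀ := by rw [hM₀]; ring
  have hM₀pos : 0 < M₀ := lt_of_lt_of_le hnpos hM₀n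
  have hmpos : (0:ℝ) < m := lt_of_lt_of_le hM₀pos hm
  have hm1 : 1 ≤ m := Nat.cast_pos.mp hmpos
  refine ⟨hm1, ?_⟩
  have l2pos := (Real.log_pos one_lt_two)
  have hl2 : (0.6931471803:ℝ) < Real.log 2 := Real.log_two_gt_d9
  -- monotonicity of x - (n/2) logb 2 x
  have hmono : M₀ - (n:ℝ)/2 * Real.logb 2 M₀ ≤ (m:ℝ) - (n:ℝ)/2 * Real.logb 2 m := by
    have e1 : Real.log ((m:ℝ)/M₀) ≤ (m:ℝ)/M₀ - 1 :=
      Real.log_le_sub_one_of_pos (by positivity)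
    have e2 : Real.logb 2 m - Real.logb 2 M₀ = Real.log ((m:ℝ)/M₀) / Real.log 2 := by
      rw [Real.log_div (ne_of_gt hmpos) (ne_of_gt hM₀pos), Real.logb, Real.logb]
      ring
    have e3 : Real.logb 2 m - Real.logb 2 M₀ ≤ ((m:ℝ)/M₀ - 1) / Real.log 2 := by
      rw [e2]
      gcongr
    have e4 : ((m:ℝ)/M₀ - 1) = ((m:ℝ) - M₀)/M₀ := by field_simp
    have e5 : (n:ℝ)/2 * (Real.logb 2 m - Real.logb 2 M₀) ≤ (m:ℝ) - M₀ := by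
      have h6 : (n:ℝ)/2 * (Real.logb 2 m - Real.logb 2 M₀)
          ≤ (n:ℝ)/2 * ((((m:ℝ) - M₀)/M₀) / Real.log 2) := by
        apply mul_le_mul_of_nonneg_left _ (by positivity)
        rw [← e4]; exact e3
      have h7 : (n:ℝ)/2 * ((((m:ℝ) - M₀)/M₀) / Real.log 2) ≤ (m:ℝ) - M₀ := by
        rw [div_div, div_mul_div_comm]
        rw [div_le_iff₀ (by positivity)]
        have hΔ : 0 ≤ (m:ℝ) - M₀ := by linarith
        have hA : (n:ℝ) * ((m:ℝ) - M₀) ≤ M₀ * ((m:ℝ) - M₀) :=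
          mul_le_mul_of_nonneg_right hM₀n hΔ
        have hB : M₀ * ((m:ℝ) - M₀) * 1 ≤ M₀ * ((m:ℝ) - M₀) * (2 * Real.log 2) :=
          mul_le_mul_of_nonneg_left (by linarith) (mul_nonneg hM₀pos.le hΔ)
        nlinarith
      linarith
    linarith
  -- value at M₀
  have hlogbM₀ : Real.logb 2 M₀ = Real.logb 2 (c₁ * L) + L := by
    have : M₀ = (c₁ * L) * n := by rw [hM₀]; ring
    rw [this, Real.logb_mul (ne_of_gt hcLpos) (ne_of_gt hnpos), hLdef]
  have hval : (n:ℝ) * 3 < M₀ - (n:ℝ)/2 * Real.logb 2 M₀ := by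
    have : M₀ - (n:ℝ)/2 * Real.logb 2 M₀
        = (n:ℝ) * (d * L - (1/2) * Real.logb 2 (c₁ * L)) := by
      rw [hlogbM₀, hM₀, hd]; ring
    rw [this]
    exact mul_lt_mul_of_pos_left hP3 hnpos
  have hkey : 2*(n:ℝ) + (n:ℝ)/2 * Real.logb 2 m < (m:ℝ) - 1 := by linarith
  -- exponential step
  have hsqm1 : 1 ≤ Real.sqrt m := by
    rw [show (1:ℝ) = Real.sqrt 1 from (Real.sqrt_one).symm]
    exact Real.sqrt_le_sqrt (by exact_mod_cast hm1)
  have hsq2 : Real.sqrt (2*m) ≤ 2 * Real.sqrt m := by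
    have : Real.sqrt (2*m) ≤ Real.sqrt (4*m) := Real.sqrt_le_sqrt (by linarith)
    have h4 : Real.sqrt (4*m) = 2 * Real.sqrt m := by
      rw [show (4:ℝ)*m = (2:ℝ)^2 * m by ring, Real.sqrt_mul (by positivity),
        Real.sqrt_sq (by norm_num : (0:ℝ) ≤ 2)]
    linarith
  have hR4 : Real.sqrt (2*m) + 1 ≤ 4 * Real.sqrt m := by linarith
  have hRpos : (0:ℝ) ≤ Real.sqrt (2*m) + 1 := by positivity
  have hpow : (Real.sqrt (2*m) + 1)^n ≤ (4 * Real.sqrt m)^n :=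
    pow_le_pow_left₀ hRpos hR4 n
  have hsqrt : Real.sqrt m = (2:ℝ) ^ (Real.logb 2 m / 2 : ℝ) := by
    have h1 : (2:ℝ) ^ (Real.logb 2 m / 2 : ℝ)
        = ((2:ℝ) ^ (Real.logb 2 m : ℝ)) ^ ((2:ℝ)⁻¹) := by
      rw [← Real.rpow_mul (by norm_num : (0:ℝ) ≤ 2)]
      ring_nf
    rw [h1, Real.rpow_logb (by norm_num) (by norm_num) hmpos, Real.sqrt_eq_rpow]
    norm_num
  have hfour : 4 * Real.sqrt m = (2:ℝ) ^ (2 + Real.logb 2 m / 2 : ℝ) := by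
    have h4 : (4:ℝ) = (2:ℝ) ^ (2:ℝ) := by
      rw [show (2:ℝ) = ((2:ℕ):ℝ) from by norm_num, Real.rpow_natCast]
      norm_num
    rw [hsqrt, h4, ← Real.rpow_add (by norm_num : (0:ℝ) < 2)]
  have hexp : (4 * Real.sqrt m)^n = (2:ℝ) ^ ((2 + Real.logb 2 m / 2) * n : ℝ) := by
    rw [hfour, ← Real.rpow_natCast ((2:ℝ) ^ (2 + Real.logb 2 m / 2 : ℝ)) n,
      ← Real.rpow_mul (by norm_num : (0:ℝ) ≤ 2)]
  have hlt : (2:ℝ) ^ ((2 + Real.logb 2 m / 2) * n : ℝ) < (2:ℝ) ^ ((m:ℝ) - 1 : ℝ) := by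
    apply (Real.rpow_lt_rpow_left_iff (by norm_num : (1:ℝ) < 2)).mpr
    rw [show (2 + Real.logb 2 m / 2) * (n:ℝ) = 2*(n:ℝ) + (n:ℝ)/2 * Real.logb 2 m
      from by ring]
    exact hkey
  have hfinal : (2:ℝ) ^ ((m:ℝ) - 1 : ℝ) = (2:ℝ) ^ (m - 1) := by
    rw [show ((m:ℝ) - 1 : ℝ) = ((m - 1 : ℕ) : ℝ) by
      rw [Nat.cast_sub hm1]; norm_num]
    exact Real.rpow_natCast 2 (m-1)
  calc (Real.sqrt (2*m) + 1)^n ≤ (4 * Real.sqrt m)^n := hpow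
    _ = (2:ℝ) ^ ((2 + Real.logb 2 m / 2) * n : ℝ) := hexp
    _ < (2:ℝ) ^ ((m:ℝ) - 1 : ℝ) := hlt
    _ = (2:ℝ) ^ (m - 1) := hfinal

lemma main_count {n m : ℕ} (hn : 1 ≤ n) (hm : 1 ≤ m)
    (u : Fin m → EuclideanSpace ℝ (Fin n)) (hu : ∀ i, ‖u i‖ = 1)
    (hSB : ¬ SelectivelyBalancing u) :
    (2:ℝ) ^ (m - 1) ≤ (Real.sqrt (2 * m) + 1) ^ n := by
  classical
  set T : (Fin m → Bool) → EuclideanSpace ℝ (Fin n) := fun σ => ∑ i, sgn (σ i) • u i with hT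
  set A : Finset (Fin m → Bool) := univ.filter (fun σ => ‖T σ‖^2 ≤ 2*m) with hA
  -- Markov: |A| ≥ 2^(m-1)
  have hcard : (2:ℝ) ^ (m-1) ≤ (A.card : ℝ) := by
    set B : Finset (Fin m → Bool) := univ.filter (fun σ => ¬ ‖T σ‖^2 ≤ 2*m) with hB
    have hBsum : (B.card : ℝ) * (2*m) ≤ ∑ σ ∈ B, ‖T σ‖^2 := by
      have := Finset.card_nsmul_le_sum B (fun σ => ‖T σ‖^2) (2*(m:ℝ))
        (fun σ hσ => le_of_lt (by
          have := (Finset.mem_filter.mp hσ).2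
          push_neg at this
          exact this))
      simpa [nsmul_eq_mul] using this
    have hsub : ∑ σ ∈ B, ‖T σ‖^2 ≤ ∑ σ : Fin m → Bool, ‖T σ‖^2 :=
      Finset.sum_le_sum_of_subset_of_nonneg (Finset.subset_univ B)
        (fun σ _ _ => by positivity)
    have htot : ∑ σ : Fin m → Bool, ‖T σ‖^2 = 2^m * m := sum_norm_sq u hu
    have hBcard : (B.card : ℝ) ≤ 2^(m-1) := by
      have h2m : (0:ℝ) < 2*m := by
        have : (1:ℝ) ≤ m := by exact_mod_cast hm
        linarith
      have hm' : m - 1 + 1 = m := Nat.succ_pred_eq_of_pos hm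
      have hpow : (2:ℝ)^m * m = 2^(m-1) * (2*m) := by
        rw [show (2:ℝ)^(m-1) * (2*m) = ((2:ℝ)^(m-1)*2)*m from by ring, ← pow_succ, hm']
      have := le_trans hBsum (le_trans hsub (le_of_eq htot))
      rw [hpow] at this
      exact le_of_mul_le_mul_right this h2m
    have hAB : A.card + B.card = 2^m := by
      rw [hA, hB]
      rw [Finset.card_filter_add_card_filter_not]
      simp [Finset.card_univ]
    have h2m : ((2:ℝ))^m = 2^(m-1) * 2 := by
      have hm' : m - 1 + 1 = m := Nat.succ_pred_eq_of_pos hm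
      rw [← pow_succ, hm']
    have : (A.card : ℝ) + B.card = 2^m := by exact_mod_cast hAB
    linarith
  -- distances ≥ 2
  have hdist : (A : Set (Fin m → Bool)).PairwiseDisjoint (fun σ => ball (T σ) 1) := by
    intro σ hσ σ' hσ' hne
    apply Metric.ball_disjoint_ball
    rw [show (1:ℝ) + 1 = 2 by norm_num]
    by_contra hlt
    push_neg at hlt
    rw [dist_eq_norm] at hlt
    exact hSB (sb_of_close u σ σ' hne hlt)
  -- packing
  haveI : Nonempty (Fin n) := Fin.pos_iff_nonempty.mp hn
  set R : ℝ := Real.sqrt (2*m) + 1 with hR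
  have hRpos : 0 ≤ R := by positivity
  have hTball : ∀ σ ∈ A, ball (T σ) 1 ⊆ closedBall (0 : EuclideanSpace ℝ (Fin n)) R := by
    intro σ hσ x hx
    have h1 : dist x (T σ) < 1 := mem_ball.mp hx
    have h2 : ‖T σ‖ ≤ Real.sqrt (2*m) := by
      have := (Finset.mem_filter.mp hσ).2
      have h2m : (0:ℝ) ≤ 2*m := by positivity
      nlinarith [Real.sq_sqrt h2m, Real.sqrt_nonneg (2*(m:ℝ)), norm_nonneg (T σ),
        abs_le_abs (le_refl (1:ℝ))]
    rw [mem_closedBall]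
    calc dist x 0 ≤ dist x (T σ) + dist (T σ) 0 := dist_triangle _ _ _
      _ ≤ 1 + ‖T σ‖ := by rw [dist_zero_right]; linarith
      _ ≤ R := by rw [hR]; linarith
  have hμunion : volume (⋃ σ ∈ A, ball (T σ) 1) = ∑ σ ∈ A, volume (ball (T σ) 1) :=
    measure_biUnion_finset hdist (fun σ _ => measurableSet_ball)
  have hμball : ∀ σ : Fin m → Bool, volume (ball (T σ) 1)
      = volume (ball (0 : EuclideanSpace ℝ (Fin n)) 1) := by
    intro σ
    rw [Measure.addHaar_ball volume (T σ) (by norm_num : (0:ℝ) ≤ 1)]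
    simp
  have hcb : volume (closedBall (0 : EuclideanSpace ℝ (Fin n)) R)
      = ENNReal.ofReal (R ^ n) * volume (ball (0 : EuclideanSpace ℝ (Fin n)) 1) := by
    rw [Measure.addHaar_closedBall volume 0 hRpos, finrank_euclideanSpace_fin]
  have hle : (A.card : ENNReal) * volume (ball (0 : EuclideanSpace ℝ (Fin n)) 1)
      ≤ ENNReal.ofReal (R ^ n) * volume (ball (0 : EuclideanSpace ℝ (Fin n)) 1) := by
    rw [← hcb]
    calc (A.card : ENNReal) * volume (ball (0 : EuclideanSpace ℝ (Fin n)) 1)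
        = ∑ σ ∈ A, volume (ball (T σ) 1) := by
          rw [Finset.sum_congr rfl (fun σ _ => hμball σ), Finset.sum_const, nsmul_eq_mul]
      _ = volume (⋃ σ ∈ A, ball (T σ) 1) := hμunion.symm
      _ ≤ volume (closedBall (0 : EuclideanSpace ℝ (Fin n)) R) :=
          measure_mono (Set.iUnion₂_subset hTball)
  have hb0 : volume (ball (0 : EuclideanSpace ℝ (Fin n)) 1) ≠ 0 :=
    (measure_ball_pos volume 0 one_pos).ne'
  have hbt : volume (ball (0 : EuclideanSpace ℝ (Fin n)) 1) ≠ ⊤ :=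
    measure_ball_lt_top.ne
  have hcardle : (A.card : ENNReal) ≤ ENNReal.ofReal (R ^ n) :=
    (ENNReal.mul_le_mul_iff_left hb0 hbt).mp hle
  have : (A.card : ℝ) ≤ R ^ n := by
    have := ENNReal.toReal_mono (by simp) hcardle
    simpa [ENNReal.toReal_ofReal (by positivity : (0:ℝ) ≤ R ^ n)] using this
  calc (2:ℝ)^(m-1) ≤ (A.card : ℝ) := hcard
    _ ≤ R ^ n := this
    _ = (Real.sqrt (2*m) + 1) ^ n := by rw [hR]

/-- for `c₁ > 1/2` and large `n`, any `≥ c₁ n log₂ n` unit vectors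
in `ℝ^n` are selectively balancing. -/
theorem selBal_upper (c₁ : ℝ) (hc₁ : 1 / 2 < c₁) :
    ∃ N : ℕ, ∀ n ≥ N, ∀ m : ℕ, c₁ * n * Real.logb 2 n ≤ m →
      ∀ u : Fin m → EuclideanSpace ℝ (Fin n), (∀ i, ‖u i‖ = 1) →
        SelectivelyBalancing u := by
  obtain ⟨N, hN2, hN⟩ := analytic c₁ hc₁
  refine ⟨N, ?_⟩
  intro n hn m hm u hu
  by_contra hSB
  obtain ⟨hm1, hlt⟩ := hN n hn m hm
  have hn1 : 1 ≤ n := le_trans (by omega) hn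
  have hge := main_count hn1 hm1 u hu hSB
  linarith
end

section
/- Identify the coordinates of R^{25} with the lattice points of the 5×5 grid {1,…,5}². Let U consist of the 25 standard basis vectors e_{(a,b)}, together with, for each interior point (a,b) ∈ {2,3,4}², the vector (1/2)(e_{(a−1,b)} + e_{(a+1,b)} + e_{(a,b−1)} + e_{(a,b+1)}). Then every vector in U is a unit vector and U is not selectively balancing: every nontrivial {−1,0,1}-combination of vectors in U has Euclidean norm at least 1. -/
open Fin.NatCast in
/-- The 34 unit vectors of the example: the 25 standard basis vectors of
`ℝ^{5×5}`, plus, for each interior point of the `5×5` grid (indexed by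
`(a,b) ∈ Fin 3 × Fin 3`, the interior point being `(a+1, b+1)` in `Fin 5`),
half the sum of the four basis vectors of its grid neighbours. -/
noncomputable def exampleVec :
    (Fin 5 × Fin 5) ⊕ (Fin 3 × Fin 3) → EuclideanSpace ℝ (Fin 5 × Fin 5)
  | Sum.inl p => EuclideanSpace.single p 1
  | Sum.inr (a, b) => (1 / 2 : ℝ) •
      (EuclideanSpace.single (((a.val : ℕ) : Fin 5), ((b.val + 1 : ℕ) : Fin 5)) 1 +
       EuclideanSpace.single (((a.val + 2 : ℕ) : Fin 5), ((b.val + 1 : ℕ) : Fin 5)) 1 +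
       EuclideanSpace.single (((a.val + 1 : ℕ) : Fin 5), ((b.val : ℕ) : Fin 5)) 1 +
       EuclideanSpace.single (((a.val + 1 : ℕ) : Fin 5), ((b.val + 2 : ℕ) : Fin 5)) 1)

namespace SelBalAux

abbrev ιx := Fin 5 × Fin 5

open Fin.NatCast

def pt1 (r : Fin 3 × Fin 3) : ιx := (((r.1.val : ℕ) : Fin 5), ((r.2.val + 1 : ℕ) : Fin 5))
def pt2 (r : Fin 3 × Fin 3) : ιx := (((r.1.val + 2 : ℕ) : Fin 5), ((r.2.val + 1 : ℕ) : Fin 5))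
def pt3 (r : Fin 3 × Fin 3) : ιx := (((r.1.val + 1 : ℕ) : Fin 5), ((r.2.val : ℕ) : Fin 5))
def pt4 (r : Fin 3 × Fin 3) : ιx := (((r.1.val + 1 : ℕ) : Fin 5), ((r.2.val + 2 : ℕ) : Fin 5))

def dd (r : Fin 3 × Fin 3) (p : ιx) : ℤ :=
  (if p = pt1 r then 1 else 0) + (if p = pt2 r then 1 else 0) +
  (if p = pt3 r then 1 else 0) + (if p = pt4 r then 1 else 0)

def cost (s : ℤ) : ℤ := min (min ((s-2)^2) (s^2)) ((s+2)^2)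
def dec3 (k : Fin 3) : ℤ := (k : ℤ) - 1

def G (b00 b01 b02 b10 b11 b12 b20 b21 b22 : ℤ) : ℤ :=
  cost 0 + cost (b00) + cost (b01) + cost (b02) + cost 0 +
  cost (b00) + cost (b01 + b10) + cost (b00 + b02 + b11) + cost (b01 + b12) + cost (b02) +
  cost (b10) + cost (b00 + b11 + b20) + cost (b01 + b10 + b12 + b21) + cost (b02 + b11 + b22) + cost (b12) +
  cost (b20) + cost (b10 + b21) + cost (b11 + b20 + b22) + cost (b12 + b21) + cost (b22) +
  cost 0 + cost (b20) + cost (b21) + cost (b22) + cost 0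

set_option maxRecDepth 100000 in
set_option maxHeartbeats 10000000 in
set_option synthInstance.maxHeartbeats 1000000 in
set_option synthInstance.maxSize 2000 in
lemma coreZ : ∀ v1 v2 v3 v4 v5 v6 v7 v8 v9 : Fin 3,
    ¬(v1 = 1 ∧ v2 = 1 ∧ v3 = 1 ∧ v4 = 1 ∧ v5 = 1 ∧ v6 = 1 ∧ v7 = 1 ∧ v8 = 1 ∧ v9 = 1) →
    4 ≤ G (dec3 v1) (dec3 v2) (dec3 v3) (dec3 v4) (dec3 v5) (dec3 v6) (dec3 v7) (dec3 v8)
      (dec3 v9) := by decide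

lemma expand (b : Fin 3 × Fin 3 → ℤ) :
    (∑ p : ιx, cost (∑ r : Fin 3 × Fin 3, b r * dd r p))
      = G (b (0,0)) (b (0,1)) (b (0,2)) (b (1,0)) (b (1,1)) (b (1,2)) (b (2,0)) (b (2,1)) (b (2,2)) := by
  simp (config := { decide := true }) [Fintype.sum_prod_type, Fin.sum_univ_succ, dd, pt1, pt2, pt3, pt4, G]
  ring_nf

lemma cost_le (a s : ℤ) (ha : a = -1 ∨ a = 0 ∨ a = 1) : cost s ≤ (2*a + s)^2 := by
  rcases ha with h | h | h <;> subst h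
  · calc cost s ≤ (s-2)^2 := le_trans (min_le_left _ _) (min_le_left _ _)
      _ = (2*(-1) + s)^2 := by ring
  · calc cost s ≤ s^2 := le_trans (min_le_left _ _) (min_le_right _ _)
      _ = (2*0 + s)^2 := by ring
  · calc cost s ≤ (s+2)^2 := min_le_right _ _
      _ = (2*1 + s)^2 := by ring

lemma ddsq : ∀ r : Fin 3 × Fin 3, (∑ p : ιx, (dd r p)^2) = 4 := by decide

lemma coordInl (q : ιx) (p : ιx) :
    exampleVec (Sum.inl q) p = if p = q then (1:ℝ) else 0 := by
  simp [exampleVec, EuclideanSpace.single_apply]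

lemma coordInr (r : Fin 3 × Fin 3) (p : ιx) :
    exampleVec (Sum.inr r) p = (1/2 : ℝ) * ((dd r p : ℤ) : ℝ) := by
  rcases r with ⟨a, b⟩
  simp [exampleVec, dd, pt1, pt2, pt3, pt4, EuclideanSpace.single_apply]
  split_ifs <;> norm_num

lemma coordSum (ε : (Fin 5 × Fin 5) ⊕ (Fin 3 × Fin 3) → ℝ) (p : ιx) :
    (∑ i, ε i • exampleVec i) p
      = ε (Sum.inl p) + (1/2 : ℝ) * ∑ r : Fin 3 × Fin 3, ε (Sum.inr r) * ((dd r p : ℤ) : ℝ) := by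
  rw [Fintype.sum_sum_type]
  have h1 : (∑ x : Fin 5 × Fin 5, ε (Sum.inl x) • exampleVec (Sum.inl x)) p
      = ∑ x : Fin 5 × Fin 5, (ε (Sum.inl x) • exampleVec (Sum.inl x)) p :=
    by rw [WithLp.ofLp_sum]; exact Finset.sum_apply p Finset.univ _
  have h2 : (∑ x : Fin 3 × Fin 3, ε (Sum.inr x) • exampleVec (Sum.inr x)) p
      = ∑ x : Fin 3 × Fin 3, (ε (Sum.inr x) • exampleVec (Sum.inr x)) p :=
    by rw [WithLp.ofLp_sum]; exact Finset.sum_apply p Finset.univ _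
  rw [PiLp.add_apply, h1, h2]
  simp only [PiLp.smul_apply, smul_eq_mul, coordInl, coordInr, mul_ite, mul_one, mul_zero]
  rw [Finset.sum_ite_eq Finset.univ p (fun q => ε (Sum.inl q))]
  simp [Finset.mul_sum]
  exact Finset.sum_congr rfl fun x _ => by ring

end SelBalAux

open SelBalAux in
/-- the 34 vectors above are unit vectors and are not
selectively balancing. -/
theorem example_not_selBal :
    (∀ i, ‖exampleVec i‖ = 1) ∧
    ∀ ε : (Fin 5 × Fin 5) ⊕ (Fin 3 × Fin 3) → ℝ,
      (∀ i, ε i = -1 ∨ ε i = 0 ∨ ε i = 1) → ε ≠ 0 →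
      1 ≤ ‖∑ i, ε i • exampleVec i‖ := by
  constructor
  · intro i
    rcases i with p | r
    · show ‖EuclideanSpace.single p (1:ℝ)‖ = 1
      simp [EuclideanSpace.norm_single]
    · rw [EuclideanSpace.norm_eq]
      have h4 : (∑ p : ιx, ‖exampleVec (Sum.inr r) p‖^2) = 1 := by
        have hc : ∀ p : ιx, ‖exampleVec (Sum.inr r) p‖^2
            = (1/4 : ℝ) * ((dd r p : ℤ) : ℝ)^2 := by
          intro p
          rw [coordInr, Real.norm_eq_abs, sq_abs]
          ring
        rw [Finset.sum_congr rfl fun p _ => hc p, ← Finset.mul_sum]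
        have : (∑ p : ιx, ((dd r p : ℤ) : ℝ)^2) = ((∑ p : ιx, (dd r p)^2 : ℤ) : ℝ) := by
          push_cast; rfl
        rw [this, ddsq r]
        norm_num
      rw [h4, Real.sqrt_one]
  · intro ε hε hne
    set v := ∑ i, ε i • exampleVec i with hv
    set n : (Fin 5 × Fin 5) ⊕ (Fin 3 × Fin 3) → ℤ :=
      fun i => if ε i = -1 then -1 else if ε i = 1 then 1 else 0 with hn
    have hcast : ∀ i, ((n i : ℤ) : ℝ) = ε i := by
      intro i
      rcases hε i with h | h | h <;> simp [hn, h] <;> norm_num [h]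
    have hn3 : ∀ i, n i = -1 ∨ n i = 0 ∨ n i = 1 := by
      intro i
      rcases hε i with h | h | h
      · left; have := hcast i; rw [h] at this; exact_mod_cast this
      · right; left; have := hcast i; rw [h] at this; exact_mod_cast this
      · right; right; have := hcast i; rw [h] at this; exact_mod_cast this
    set M : ιx → ℤ :=
      fun p => 2 * n (Sum.inl p) + ∑ r : Fin 3 × Fin 3, n (Sum.inr r) * dd r p with hM
    have hMv : ∀ p : ιx, ((M p : ℤ) : ℝ) = 2 * v p := by
      intro p
      rw [hv, coordSum ε p]
      simp only [hM]
      push_cast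
      simp_rw [hcast]
      ring
    have key : 4 ≤ ∑ p : ιx, (M p)^2 := by
      by_cases hb : ∀ r : Fin 3 × Fin 3, n (Sum.inr r) = 0
      · have hex : ∃ p, n (Sum.inl p) ≠ 0 := by
          by_contra hco
          push_neg at hco
          apply hne
          funext i
          have hi : n i = 0 := by
            rcases i with p | r
            exacts [hco p, hb r]
          have := hcast i
          rw [hi] at this
          simpa using this.symm
        obtain ⟨p₀, hp₀⟩ := hex
        have hM0 : M p₀ = 2 * n (Sum.inl p₀) := by
          simp [hM, hb]
        have h1 : 4 ≤ (M p₀)^2 := by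
          rcases hn3 (Sum.inl p₀) with h | h | h
          · rw [hM0, h]; norm_num
          · exact absurd h hp₀
          · rw [hM0, h]; norm_num
        calc (4:ℤ) ≤ (M p₀)^2 := h1
          _ ≤ ∑ p, (M p)^2 :=
            Finset.single_le_sum (fun p _ => sq_nonneg (M p)) (Finset.mem_univ p₀)
      · push_neg at hb
        obtain ⟨r₀, hr₀⟩ := hb
        have step1 : ∑ p : ιx, cost (∑ r : Fin 3 × Fin 3, n (Sum.inr r) * dd r p)
            ≤ ∑ p : ιx, (M p)^2 := by
          refine Finset.sum_le_sum fun p _ => ?_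
          have := cost_le (n (Sum.inl p)) (∑ r : Fin 3 × Fin 3, n (Sum.inr r) * dd r p)
            (hn3 _)
          simpa [hM] using this
        set t : Fin 3 × Fin 3 → Fin 3 :=
          fun r => if n (Sum.inr r) = -1 then 0 else if n (Sum.inr r) = 1 then 2 else 1 with ht
        have hdec : ∀ r, dec3 (t r) = n (Sum.inr r) := by
          intro r
          rcases hn3 (Sum.inr r) with h | h | h <;> simp [ht, h, dec3] <;> decide
        have htr₀ : t r₀ ≠ 1 := by
          rcases hn3 (Sum.inr r₀) with h | h | h
          · simp [ht, h]
          · exact absurd h hr₀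
          · simp [ht, h]
        have hcore := coreZ (t (0,0)) (t (0,1)) (t (0,2)) (t (1,0)) (t (1,1)) (t (1,2))
          (t (2,0)) (t (2,1)) (t (2,2)) (by
            rintro ⟨h1, h2, h3, h4, h5, h6, h7, h8, h9⟩
            apply htr₀
            rcases r₀ with ⟨i, j⟩
            fin_cases i <;> fin_cases j <;> assumption)
        simp only [hdec] at hcore
        have hexp := expand (fun r => n (Sum.inr r))
        rw [hexp] at step1
        exact le_trans hcore step1
    rw [EuclideanSpace.norm_eq]
    have hpt : ∀ p : ιx, ‖v p‖^2 = (1/4 : ℝ) * ((M p : ℤ) : ℝ)^2 := by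
      intro p
      have h := hMv p
      have hvp : v p = ((M p : ℤ) : ℝ)/2 := by linarith
      rw [Real.norm_eq_abs, sq_abs, hvp]
      ring
    have h1 : (1:ℝ) ≤ ∑ p : ιx, ‖v p‖^2 := by
      rw [Finset.sum_congr rfl fun p _ => hpt p, ← Finset.mul_sum]
      have hc : (∑ p : ιx, ((M p : ℤ) : ℝ)^2) = ((∑ p : ιx, (M p)^2 : ℤ) : ℝ) := by
        push_cast; rfl
      have h4 : (4:ℝ) ≤ ∑ p : ιx, ((M p : ℤ) : ℝ)^2 := by
        rw [hc]; exact_mod_cast key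
      linarith
    calc (1:ℝ) = Real.sqrt 1 := Real.sqrt_one.symm
      _ ≤ _ := Real.sqrt_le_sqrt h1
end

section
/- With the construction as given (S ⊂ Z^d of size 4^k with common Euclidean norm, r = max ‖u‖_∞ over u ∈ S, L > 2r, chain S_0 ⊂ ⋯ ⊂ S_k with |S_i| = 4^i, and unit vectors u_{t,i} = 2^{−i} ∑_{y∈S_i} e_{t+y} for t ∈ [1+r, L−r]^d ∩ Z^d), the resulting set of (k+1)(L−2r)^d unit vectors in R^{L^d} is not selectively balancing: every nontrivial {−1,0,1}-combination has Euclidean norm at least 1. -/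
open Finset

private lemma zmodInj (L : ℕ) [NeZero L] {a b : ℤ}
    (ha1 : 1 ≤ a) (ha2 : a ≤ L) (hb1 : 1 ≤ b) (hb2 : b ≤ L)
    (h : (a : ZMod L) = (b : ZMod L)) : a = b := by
  have hd : (L : ℤ) ∣ b - a := ((ZMod.intCast_eq_intCast_iff a b L).mp h).dvd
  have hL : 0 < (L : ℤ) := by exact_mod_cast (NeZero.pos L)
  rcases hd with ⟨c, hc⟩
  rcases lt_trichotomy c 0 with h1 | h1 | h1
  · nlinarith
  · subst h1; simp at hc; omega
  · nlinarith

/-- reduction of `t + y` to `(ZMod L)^d` -/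
private def Rd (d L : ℕ) (t y : Fin d → ℤ) : Fin d → ZMod L :=
  fun j => ((t j + y j : ℤ) : ZMod L)

/-- number of `y ∈ s` with `t + y ≡ x` -/
private def Cnt (d L : ℕ) (s : Finset (Fin d → ℤ)) (x : Fin d → ZMod L)
    (t : Fin d → ℤ) : ℕ :=
  (s.filter (fun y => x = Rd d L t y)).card

/-- the `(k+1)(L-2r)^d` unit vectors
`u_{t,i} = 2^{-i} ∑_{y ∈ S_i} e_{t+y}`, for `t ∈ ([1+r, L-r] ∩ ℤ)^d` and
`0 ≤ i ≤ k`, are not selectively balancing: every nontrivial `{-1,0,1}`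
combination has Euclidean norm at least `1`.  Coordinates of `ℝ^{L^d}` are
identified with the integer points of `[1,L]^d` via the reduction `ℤ → ZMod L`. -/
theorem construction_not_selBal (d k L r : ℕ) [NeZero L] (hL : 2 * r < L)
    (S : Finset (Fin d → ℤ)) (hScard : S.card = 4 ^ k)
    (hSnorm : ∃ R : ℝ, ∀ u ∈ S, Real.sqrt (∑ j, ((u j : ℝ)) ^ 2) = R)
    (hr : ∀ u ∈ S, ∀ j, |u j| ≤ (r : ℤ))
    (S' : Fin (k + 1) → Finset (Fin d → ℤ))
    (hchain : ∀ i i' : Fin (k + 1), i ≤ i' → S' i ⊆ S' i')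
    (hcard : ∀ i : Fin (k + 1), (S' i).card = 4 ^ i.val)
    (htop : S' (Fin.last k) = S)
    (T : Finset (Fin d → ℤ))
    (hT : T = Fintype.piFinset fun _ : Fin d => Finset.Icc ((1 : ℤ) + r) ((L : ℤ) - r))
    (u : (Fin d → ℤ) → Fin (k + 1) → EuclideanSpace ℝ (Fin d → ZMod L))
    (hu : ∀ t i, u t i = (2 : ℝ) ^ (-(i.val : ℤ)) •
      ∑ y ∈ S' i, EuclideanSpace.single (fun j : Fin d => ((t j + y j : ℤ) : ZMod L)) (1 : ℝ)) :
    T.card * (k + 1) = (L - 2 * r) ^ d * (k + 1) ∧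
    ∀ ε : (Fin d → ℤ) → Fin (k + 1) → ℝ,
      (∀ t i, ε t i = -1 ∨ ε t i = 0 ∨ ε t i = 1) →
      (∃ t ∈ T, ∃ i, ε t i ≠ 0) →
      1 ≤ ‖∑ t ∈ T, ∑ i, ε t i • u t i‖ := by
  constructor
  · -- cardinality of T
    subst hT
    rw [Fintype.card_piFinset]
    have hIcc : ∀ _j : Fin d, ((Finset.Icc ((1:ℤ)+r) ((L:ℤ)-r)).card) = L - 2*r := by
      intro j; rw [Int.card_Icc]; omega
    rw [Finset.prod_congr rfl (fun j _ => hIcc j), Finset.prod_const, Finset.card_univ,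
      Fintype.card_fin]
  intro ε hε hnt
  set v := ∑ t ∈ T, ∑ i, ε t i • u t i with hv
  have hu' : ∀ t i, u t i = (2 : ℝ) ^ (-(i.val : ℤ)) •
      ∑ y ∈ S' i, EuclideanSpace.single (Rd d L t y) (1 : ℝ) := hu
  -- basic box facts
  have hTbox : ∀ t ∈ T, ∀ j, 1 + (r:ℤ) ≤ t j ∧ t j ≤ (L:ℤ) - r := by
    intro t ht j
    subst hT
    rw [Fintype.mem_piFinset] at ht
    have := ht j
    rw [Finset.mem_Icc] at this
    exact this
  have hSsub : ∀ i, S' i ⊆ S := fun i => htop ▸ hchain i (Fin.last k) (Fin.le_last i)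
  have hrange : ∀ t ∈ T, ∀ y ∈ S, ∀ j, 1 ≤ t j + y j ∧ t j + y j ≤ L := by
    intro t ht y hy j
    have h1 := hTbox t ht j
    have h2 := hr y hy j
    rw [abs_le] at h2
    omega
  have hredinj : ∀ t ∈ T, ∀ y ∈ S, ∀ t' ∈ T, ∀ y' ∈ S,
      Rd d L t y = Rd d L t' y' → ∀ j, t j + y j = t' j + y' j := by
    intro t ht y hy t' ht' y' hy' heq j
    have h1 := hrange t ht y hy j
    have h2 := hrange t' ht' y' hy' j
    exact zmodInj L h1.1 h1.2 h2.1 h2.2 (congrFun heq j)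
  -- integer version of ε
  set E : (Fin d → ℤ) → Fin (k+1) → ℤ :=
    fun t i => if ε t i = 1 then 1 else if ε t i = -1 then -1 else 0 with hE
  have hEcast : ∀ t i, (E t i : ℝ) = ε t i := by
    intro t i
    rcases hε t i with h | h | h <;> simp [hE, h] <;> norm_num
  have hEzero : ∀ t i, ε t i = 0 → E t i = 0 := by
    intro t i h; simp [hE, h]
  -- maximal level m
  have hFne : (univ.filter (fun i : Fin (k+1) => ∃ t ∈ T, ε t i ≠ 0)).Nonempty := by
    obtain ⟨t, ht, i, hi⟩ := hnt
    exact ⟨i, by simp only [Finset.mem_filter, Finset.mem_univ, true_and]; exact ⟨t, ht, hi⟩⟩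
  set m := (univ.filter (fun i : Fin (k+1) => ∃ t ∈ T, ε t i ≠ 0)).max' hFne with hm
  have hmmem : ∃ t ∈ T, ε t m ≠ 0 := by
    have := Finset.max'_mem _ hFne
    rw [Finset.mem_filter] at this
    exact this.2
  have hhigh : ∀ t ∈ T, ∀ i, m < i → ε t i = 0 := by
    intro t ht i hi
    by_contra h
    have : i ≤ m := Finset.le_max' _ i (by
      simp only [Finset.mem_filter, Finset.mem_univ, true_and]; exact ⟨t, ht, h⟩)
    exact absurd hi (not_lt.mpr this)
  -- the set of translates active at level m
  set Ts := T.filter (fun t => ε t m ≠ 0) with hTs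
  have hTsne : Ts.Nonempty := by
    obtain ⟨t, ht, h⟩ := hmmem
    exact ⟨t, by rw [hTs, Finset.mem_filter]; exact ⟨ht, h⟩⟩
  have hTsT : Ts ⊆ T := Finset.filter_subset _ _
  have hTsε : ∀ t ∈ Ts, ε t m ≠ 0 := by
    intro t ht; rw [hTs, Finset.mem_filter] at ht; exact ht.2
  -- choose a maximizer of ⟨y, ·⟩ over Ts for each y
  have hsel : ∀ y : Fin d → ℤ, ∃ t, t ∈ Ts ∧ ∀ t' ∈ Ts, (∑ j, y j * t' j) ≤ ∑ j, y j * t j := by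
    intro y
    obtain ⟨t, ht, hmax⟩ := Ts.exists_max_image (fun t => ∑ j, y j * t j) hTsne
    exact ⟨t, ht, hmax⟩
  choose tsel htsel₁ htsel₂ using hsel
  -- equal square-norms on S
  have hQ : ∀ y ∈ S, ∀ y' ∈ S, (∑ j, (y j)^2 : ℤ) = ∑ j, (y' j)^2 := by
    obtain ⟨R, hR⟩ := hSnorm
    intro y hy y' hy'
    have n1 : (0:ℝ) ≤ ∑ j, ((y j:ℝ))^2 := by positivity
    have n2 : (0:ℝ) ≤ ∑ j, ((y' j:ℝ))^2 := by positivity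
    have e1 := hR y hy
    have e2 := hR y' hy'
    have h1 : (∑ j, ((y j:ℝ))^2) = ∑ j, ((y' j:ℝ))^2 := by
      rw [← Real.sq_sqrt n1, ← Real.sq_sqrt n2, e1, e2]
    exact_mod_cast h1
  -- the uniqueness (lonely point) property
  have huniq : ∀ y₀ ∈ S' m, ∀ t ∈ Ts, ∀ y ∈ S' m,
      Rd d L t y = Rd d L (tsel y₀) y₀ → t = tsel y₀ ∧ y = y₀ := by
    intro y₀ hy₀ t ht y hy heq
    have hy₀S : y₀ ∈ S := hSsub m hy₀
    have hyS : y ∈ S := hSsub m hy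
    have htT : t ∈ T := hTsT ht
    have ht₀T : tsel y₀ ∈ T := hTsT (htsel₁ y₀)
    have hadd : ∀ j, t j + y j = tsel y₀ j + y₀ j :=
      hredinj t htT y hyS (tsel y₀) ht₀T y₀ hy₀S heq
    have hip : (∑ j, y₀ j * t j) + ∑ j, y₀ j * y j
        = (∑ j, y₀ j * tsel y₀ j) + ∑ j, y₀ j * y₀ j := by
      rw [← Finset.sum_add_distrib, ← Finset.sum_add_distrib]
      apply Finset.sum_congr rfl
      intro j _
      rw [← mul_add, ← mul_add, hadd j]
    have hmax := htsel₂ y₀ t ht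
    have hyy : (∑ j, y₀ j * y₀ j) ≤ ∑ j, y₀ j * y j := by linarith
    have hQeq := hQ y hyS y₀ hy₀S
    have hsq : (∑ j, (y₀ j)^2 : ℤ) = ∑ j, y₀ j * y₀ j := by
      apply Finset.sum_congr rfl; intro j _; ring
    have hzero : ∑ j, (y j - y₀ j)^2 ≤ 0 := by
      have expand : ∑ j, (y j - y₀ j)^2
          = (∑ j, (y j)^2) + (∑ j, (y₀ j)^2) - 2 * ∑ j, y₀ j * y j := by
        rw [Finset.mul_sum, ← Finset.sum_add_distrib, ← Finset.sum_sub_distrib]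
        apply Finset.sum_congr rfl
        intro j _
        ring
      rw [expand, hQeq]
      linarith [hyy, hsq]
    have hsum0 : ∑ j, (y j - y₀ j)^2 = 0 :=
      le_antisymm hzero (Finset.sum_nonneg fun j _ => sq_nonneg _)
    have hyeq : y = y₀ := by
      funext j
      have h1 := (Finset.sum_eq_zero_iff_of_nonneg (fun j _ => sq_nonneg (y j - y₀ j))).mp
        hsum0 j (Finset.mem_univ j)
      have h2 := sq_eq_zero_iff.mp h1
      omega
    refine ⟨?_, hyeq⟩
    funext j
    have h1 := hadd j
    have h2 : y j = y₀ j := by rw [hyeq]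
    omega
  -- coordinate formula for v
  have hvx : ∀ x : Fin d → ZMod L, v x = ∑ t ∈ T, ∑ i : Fin (k+1),
      (E t i : ℝ) * ((2:ℝ)^(-(i.val:ℤ)) * (Cnt d L (S' i) x t : ℝ)) := by
    intro x
    rw [hv, WithLp.ofLp_sum, Finset.sum_apply]
    apply Finset.sum_congr rfl
    intro t _
    rw [WithLp.ofLp_sum, Finset.sum_apply]
    apply Finset.sum_congr rfl
    intro i _
    rw [hu' t i, hEcast]
    have h1 : (ε t i • ((2:ℝ)^(-(i.val:ℤ)) • ∑ y ∈ S' i, EuclideanSpace.single (Rd d L t y) (1:ℝ))) x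
        = ε t i * ((2:ℝ)^(-(i.val:ℤ)) *
            ((∑ y ∈ S' i, EuclideanSpace.single (Rd d L t y) (1:ℝ)) x)) := rfl
    rw [h1]
    congr 2
    rw [WithLp.ofLp_sum, Finset.sum_apply]
    have h2 : ∀ y ∈ S' i, (EuclideanSpace.single (Rd d L t y) (1:ℝ)) x
        = if x = Rd d L t y then (1:ℝ) else 0 := by
      intro y _
      simp [EuclideanSpace.single_apply]
    rw [Finset.sum_congr rfl h2, Finset.sum_boole, Cnt]
  -- key estimate at the lonely points
  have hkey : ∀ y₀ ∈ S' m, (1:ℝ) / 4 ^ (m.val) ≤ (v (Rd d L (tsel y₀) y₀))^2 := by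
    intro y₀ hy₀
    set t₀ := tsel y₀ with ht₀
    set x := Rd d L t₀ y₀ with hx
    have ht₀Ts : t₀ ∈ Ts := htsel₁ y₀
    have ht₀T : t₀ ∈ T := hTsT ht₀Ts
    set M : ℤ := ∑ t ∈ T, ∑ i, E t i * 2^(m.val - i.val) * (Cnt d L (S' i) x t : ℤ) with hM
    -- 2^m * v x = M
    have hA : (2:ℝ)^(m.val) * v x = (M : ℝ) := by
      rw [hvx x, Finset.mul_sum, hM]
      push_cast
      apply Finset.sum_congr rfl
      intro t ht
      rw [Finset.mul_sum]
      apply Finset.sum_congr rfl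
      intro i _
      by_cases hi : i.val ≤ m.val
      · have h2 : (2:ℝ)^(m.val) * (2:ℝ)^(-(i.val:ℤ)) = 2^(m.val - i.val) := by
          rw [← zpow_natCast (2:ℝ) m.val, ← zpow_natCast (2:ℝ) (m.val - i.val),
            ← zpow_add₀ (two_ne_zero : (2:ℝ) ≠ 0)]
          congr 1
          omega
        rw [← h2]
        ring
      · have hmi : m < i := by
          rw [Fin.lt_def]; omega
        have hE0 : E t i = 0 := hEzero t i (hhigh t ht i hmi)
        rw [hE0]
        push_cast
        ring
    -- split M at level m
    have hsplit : M = (∑ t ∈ T, E t m * (Cnt d L (S' m) x t : ℤ))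
        + ∑ t ∈ T, ∑ i ∈ univ.erase m,
            E t i * 2^(m.val - i.val) * (Cnt d L (S' i) x t : ℤ) := by
      rw [hM, ← Finset.sum_add_distrib]
      apply Finset.sum_congr rfl
      intro t _
      rw [← Finset.add_sum_erase _ _ (Finset.mem_univ m)]
      simp
    -- the level-m count
    have hCsing : ∀ t ∈ Ts, Cnt d L (S' m) x t = if t = t₀ then 1 else 0 := by
      intro t ht
      by_cases h : t = t₀
      · rw [if_pos h, Cnt, Finset.card_eq_one]
        refine ⟨y₀, ?_⟩
        ext y
        simp only [Finset.mem_filter, Finset.mem_singleton]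
        constructor
        · rintro ⟨hy, hxy⟩
          exact (huniq y₀ hy₀ t ht y hy hxy.symm).2
        · rintro rfl
          exact ⟨hy₀, by rw [h]⟩
      · rw [if_neg h, Cnt, Finset.card_eq_zero, Finset.filter_eq_empty_iff]
        intro y hy hxy
        exact h (huniq y₀ hy₀ t ht y hy hxy.symm).1
    have hAval : (∑ t ∈ T, E t m * (Cnt d L (S' m) x t : ℤ)) = E t₀ m := by
      rw [Finset.sum_eq_single_of_mem t₀ ht₀T]
      · rw [hCsing t₀ ht₀Ts, if_pos rfl]; push_cast; ring
      · intro t ht hne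
        by_cases hz : ε t m = 0
        · rw [hEzero t m hz]; ring
        · have htm : t ∈ Ts := by rw [hTs, Finset.mem_filter]; exact ⟨ht, hz⟩
          rw [hCsing t htm, if_neg hne]
          push_cast
          ring
    have hBeven : (2:ℤ) ∣ ∑ t ∈ T, ∑ i ∈ univ.erase m,
        E t i * 2^(m.val - i.val) * (Cnt d L (S' i) x t : ℤ) := by
      apply Finset.dvd_sum
      intro t ht
      apply Finset.dvd_sum
      intro i hi
      have hne : i ≠ m := Finset.ne_of_mem_erase hi
      by_cases hlt : i.val < m.val
      · apply dvd_mul_of_dvd_left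
        apply dvd_mul_of_dvd_right
        exact dvd_pow_self 2 (by omega)
      · have hmi : m < i := by
          rw [Fin.lt_def]
          rcases lt_or_eq_of_le (not_lt.mp hlt) with h | h
          · exact h
          · exact absurd (Fin.ext h.symm : i = m) hne
        rw [hEzero t i (hhigh t ht i hmi)]
        simp
    -- M is odd, hence M² ≥ 1
    have hEpm : E t₀ m = 1 ∨ E t₀ m = -1 := by
      have hne := hTsε t₀ ht₀Ts
      rcases hε t₀ m with h | h | h
      · right; norm_num [hE, h]
      · exact absurd h hne
      · left; norm_num [hE, h]
    have hModd : Odd M := by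
      obtain ⟨b, hb⟩ := hBeven
      rw [hsplit, hAval, hb]
      rcases hEpm with h | h <;> rw [h]
      · exact ⟨b, by ring⟩
      · exact ⟨b - 1, by ring⟩
    have hMsq : (1:ℤ) ≤ M^2 := by
      have hM0 : M ≠ 0 := by
        intro h; rw [h] at hModd; exact (Int.not_even_iff_odd.mpr hModd) Even.zero
      have h1 : 1 ≤ |M| := Int.one_le_abs hM0
      nlinarith [sq_abs M]
    -- conclude
    have h4 : ((2:ℝ)^m.val)^2 = 4^m.val := by
      rw [show (4:ℝ) = 2^2 by norm_num, ← pow_mul, ← pow_mul, Nat.mul_comm]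
    have hMsqR : (1:ℝ) ≤ ((M:ℝ))^2 := by exact_mod_cast hMsq
    have hvsq : (4:ℝ)^m.val * (v x)^2 = ((M:ℝ))^2 := by
      rw [← hA, mul_pow, h4]
    rw [div_le_iff₀ (by positivity : (0:ℝ) < 4^m.val)]
    nlinarith [hvsq, hMsqR]
  -- assemble
  have hinj : ∀ y₁ ∈ S' m, ∀ y₂ ∈ S' m,
      Rd d L (tsel y₁) y₁ = Rd d L (tsel y₂) y₂ → y₁ = y₂ := by
    intro y₁ hy₁ y₂ hy₂ h
    exact ((huniq y₂ hy₂ (tsel y₁) (htsel₁ y₁) y₁ hy₁ h).2)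
  have hnormsq : (1:ℝ) ≤ ∑ x, (v x)^2 := by
    calc (1:ℝ) = ((S' m).card : ℝ) * (1/4^m.val) := by
          rw [hcard m]; push_cast; field_simp
      _ = ∑ _y ∈ S' m, (1:ℝ)/4^m.val := by rw [Finset.sum_const, nsmul_eq_mul]
      _ ≤ ∑ y ∈ S' m, (v (Rd d L (tsel y) y))^2 := Finset.sum_le_sum hkey
      _ = ∑ x ∈ (S' m).image (fun y => Rd d L (tsel y) y), (v x)^2 := by
          rw [Finset.sum_image hinj]
      _ ≤ ∑ x, (v x)^2 :=
          Finset.sum_le_sum_of_subset_of_nonneg (Finset.subset_univ _)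
            (fun x _ _ => sq_nonneg _)
  have hnorm : ‖v‖ = Real.sqrt (∑ x, (v x)^2) := by
    rw [EuclideanSpace.norm_eq]
    simp_rw [Real.norm_eq_abs, sq_abs]
  rw [hnorm]
  calc (1:ℝ) = Real.sqrt 1 := Real.sqrt_one.symm
    _ ≤ _ := Real.sqrt_le_sqrt hnormsq
end

section
/- Let S ⊂ Z^d be in strictly convex position, T ⊂ Z^d finite nonempty, and ε: T → {−1, 1}. Then the vector w = ∑_{t∈T} ε(t) ∑_{y∈S} e_{t+y} ∈ R^{Z^d} has at least |S| coordinates in which it equals ±1. -/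
/-- if `S ⊂ ℤ^d` is in strictly convex position and
`ε : T → {-1,1}`, then `w = ∑_{t∈T} ε(t) ∑_{y∈S} e_{t+y}` has at least `|S|`
coordinates equal to `±1`. -/
theorem many_pm_one_coords {d : ℕ} (S T : Finset (Fin d → ℤ))
    (hS : ∀ y ∈ S, (fun i => (y i : ℝ)) ∉
      convexHull ℝ {z : Fin d → ℝ | ∃ y' ∈ S, y' ≠ y ∧ z = fun i => (y' i : ℝ)})
    (hT : T.Nonempty) (ε : (Fin d → ℤ) → ℝ)
    (hε : ∀ t ∈ T, ε t = 1 ∨ ε t = -1) :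
    S.card ≤ {x : Fin d → ℤ |
      (∑ t ∈ T, ε t • ∑ y ∈ S, Finsupp.single (t + y) (1 : ℝ)) x = 1 ∨
      (∑ t ∈ T, ε t • ∑ y ∈ S, Finsupp.single (t + y) (1 : ℝ)) x = -1}.ncard := by
  classical
  set W : ((Fin d → ℤ) →₀ ℝ) := ∑ t ∈ T, ε t • ∑ y ∈ S, Finsupp.single (t + y) (1 : ℝ)
    with hW
  set A : Set (Fin d → ℤ) := {x : Fin d → ℤ | W x = 1 ∨ W x = -1} with hA
  -- evaluation formula
  have hWeval : ∀ x, W x = ∑ t ∈ T, ε t * ∑ y ∈ S, (if t + y = x then (1:ℝ) else 0) := by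
    intro x
    simp [hW, Finsupp.finset_sum_apply, Finsupp.single_apply]
  -- the cast map
  set c : (Fin d → ℤ) → (Fin d → ℝ) := fun v i => (v i : ℝ) with hc
  have hcadd : ∀ a b, c (a + b) = c a + c b := by
    intro a b; funext i; simp [hc]
  -- A is finite
  have hAfin : A.Finite := by
    apply Set.Finite.subset (W.support.finite_toSet)
    intro x hx
    simp only [Finset.mem_coe, Finsupp.mem_support_iff]
    rcases hx with h | h <;> rw [h] <;> norm_num
  -- key claim: for each y ∈ S, a lonely point
  have key : ∀ y ∈ S, ∃ x, x ∈ A ∧ (∃ t ∈ T, t + y = x) ∧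
      (∀ t ∈ T, ∀ y' ∈ S, t + y' = x → y' = y) := by
    intro y hy
    -- separate y from the other points of S
    obtain ⟨f, u, hfu, huy⟩ := geometric_hahn_banach_closed_point
      (s := convexHull ℝ {z : Fin d → ℝ | ∃ y' ∈ S, y' ≠ y ∧ z = fun i => (y' i : ℝ)})
      (convex_convexHull _ _)
      (by
        have hfin : ({z : Fin d → ℝ | ∃ y' ∈ S, y' ≠ y ∧ z = fun i => (y' i : ℝ)}).Finite := by
          have : {z : Fin d → ℝ | ∃ y' ∈ S, y' ≠ y ∧ z = fun i => (y' i : ℝ)} ⊆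
              c '' ↑S := by
            rintro z ⟨y', hy', -, rfl⟩
            exact ⟨y', hy', rfl⟩
          exact Set.Finite.subset (S.finite_toSet.image c) this
        exact (hfin.isCompact_convexHull ℝ).isClosed)
      (hS y hy)
    have hsep : ∀ y' ∈ S, y' ≠ y → f (c y') < f (c y) := by
      intro y' hy' hne
      refine lt_trans (hfu _ ?_) huy
      exact subset_convexHull ℝ _ ⟨y', hy', hne, rfl⟩
    -- maximize f ∘ c over T
    obtain ⟨t₀, ht₀, hmax⟩ := T.exists_max_image (fun t => f (c t)) hT
    refine ⟨t₀ + y, ?_, ⟨t₀, ht₀, rfl⟩, ?_⟩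
    · -- uniqueness of representation
      have huniq : ∀ t ∈ T, ∀ y' ∈ S, t + y' = t₀ + y → t = t₀ ∧ y' = y := by
        intro t ht y' hy' heq
        have hyy : y' = y := by
          by_contra hne
          have h1 : f (c t) + f (c y') < f (c t₀) + f (c y) :=
            add_lt_add_of_le_of_lt (hmax t ht) (hsep y' hy' hne)
          have h2 : f (c t) + f (c y') = f (c t₀) + f (c y) := by
            have := congrArg (fun v => f (c v)) heq
            simpa [hcadd, map_add] using this
          exact absurd h2 (ne_of_lt h1)
        subst hyy
        exact ⟨by exact add_right_cancel heq, rfl⟩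
      -- now compute W (t₀ + y)
      have hval : W (t₀ + y) = ε t₀ := by
        rw [hWeval]
        rw [Finset.sum_eq_single_of_mem t₀ ht₀]
        · have : ∑ y' ∈ S, (if t₀ + y' = t₀ + y then (1:ℝ) else 0) = 1 := by
            rw [Finset.sum_eq_single_of_mem y hy]
            · simp
            · intro y' hy' hne
              have : t₀ + y' ≠ t₀ + y := by
                intro h; exact hne (add_left_cancel h)
              simp [this]
          rw [this, mul_one]
        · intro t ht htne
          have : ∑ y' ∈ S, (if t + y' = t₀ + y then (1:ℝ) else 0) = 0 := by
            apply Finset.sum_eq_zero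
            intro y' hy'
            have : t + y' ≠ t₀ + y := by
              intro h
              exact htne (huniq t ht y' hy' h).1
            simp [this]
          rw [this, mul_zero]
      rcases hε t₀ ht₀ with h | h
      · exact Or.inl (by rw [hval, h])
      · exact Or.inr (by rw [hval, h])
    · -- lonely: the y-component is forced
      intro t ht y' hy' heq
      by_contra hne
      have h1 : f (c t) + f (c y') < f (c t₀) + f (c y) :=
        add_lt_add_of_le_of_lt (hmax t ht) (hsep y' hy' hne)
      have h2 : f (c t) + f (c y') = f (c t₀) + f (c y) := by
        have := congrArg (fun v => f (c v)) heq
        simpa [hcadd, map_add] using this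
      exact absurd h2 (ne_of_lt h1)
  -- build the injection
  choose! g hgA hgrep hguniq using key
  have h1 : (↑S : Set (Fin d → ℤ)).ncard ≤ A.ncard := by
    apply Set.ncard_le_ncard_of_injOn g (fun a ha => hgA a ha) _ hAfin
    intro a ha b hb hab
    obtain ⟨t, ht, htb⟩ := hgrep b hb
    have : t + b = g a := by rw [htb, hab]
    exact (hguniq a ha t ht b hb this).symm
  simpa [Set.ncard_coe_finset] using h1
end

section
/- Let v = v_0 + v_1 + ⋯ + v_j in R^N, where for each i ≤ j every coordinate of v_i is an integer multiple of 2^{−i}, and v_j has at least 4^j coordinates equal to ±2^{−j}. Then ‖v‖ ≥ 1 in the Euclidean norm. -/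
/-- if `v = v_0 + ⋯ + v_j` where every coordinate of `v_i` is an
integer multiple of `2^{-i}`, and `v_j` equals `±2^{-j}` in at least `4^j`
coordinates, then `‖v‖ ≥ 1`. -/
theorem norm_sum_ge_one {N j : ℕ} (v : Fin (j + 1) → EuclideanSpace ℝ (Fin N))
    (hmul : ∀ i : Fin (j + 1), ∀ x, ∃ m : ℤ, v i x = (m : ℝ) * (2 : ℝ) ^ (-(i.val : ℤ)))
    (hbig : 4 ^ j ≤ {x : Fin N |
        v (Fin.last j) x = (2 : ℝ) ^ (-(j : ℤ)) ∨
        v (Fin.last j) x = -(2 : ℝ) ^ (-(j : ℤ))}.ncard) :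
    1 ≤ ‖∑ i, v i‖ := by
  set w : EuclideanSpace ℝ (Fin N) := ∑ i, v i with hw
  set S : Set (Fin N) := {x : Fin N |
        v (Fin.last j) x = (2 : ℝ) ^ (-(j : ℤ)) ∨
        v (Fin.last j) x = -(2 : ℝ) ^ (-(j : ℤ))} with hS
  have hSfin : S.Finite := Set.toFinite _
  have h2ne : (2 : ℝ) ^ (-(j : ℤ)) ≠ 0 := by positivity
  have key : ∀ x ∈ S, (2 : ℝ) ^ (-(j : ℤ)) ≤ |w x| := by
    intro x hx
    choose m hm using fun i => hmul i x
    have hwx : w x = ((∑ i, m i * 2 ^ (j - i.val) : ℤ) : ℝ) * (2 : ℝ) ^ (-(j : ℤ)) := by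
      rw [hw]
      have : (∑ i, v i) x = ∑ i, v i x := by
        rw [WithLp.ofLp_sum, Finset.sum_apply]
      rw [this]
      push_cast
      rw [Finset.sum_mul]
      refine Finset.sum_congr rfl fun i _ => ?_
      rw [hm i, mul_assoc]
      congr 1
      rw [← zpow_natCast (2 : ℝ) (j - i.val), ← zpow_add₀ (by norm_num : (2:ℝ) ≠ 0)]
      congr 1
      have : i.val ≤ j := Nat.lt_succ_iff.mp i.isLt
      omega
    set M : ℤ := ∑ i, m i * 2 ^ (j - i.val) with hM
    have hlast : m (Fin.last j) = 1 ∨ m (Fin.last j) = -1 := by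
      have hv := hm (Fin.last j)
      simp only [Fin.val_last] at hv
      rcases hx with h | h
      · left
        have : (m (Fin.last j) : ℝ) = 1 := by
          rw [hv] at h
          have := mul_right_cancel₀ h2ne (h.trans (one_mul ((2:ℝ) ^ (-(j:ℤ)))).symm)
          exact_mod_cast this
        exact_mod_cast this
      · right
        have : (m (Fin.last j) : ℝ) = -1 := by
          rw [hv] at h
          have := mul_right_cancel₀ h2ne (h.trans (neg_one_mul ((2:ℝ) ^ (-(j:ℤ)))).symm)
          exact_mod_cast this
        exact_mod_cast this
    have hModd : Odd M := by
      rw [hM, Fin.sum_univ_castSucc]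
      have heven : Even (∑ i : Fin j, m i.castSucc * 2 ^ (j - (i.castSucc).val)) := by
        refine Finset.even_sum _ fun i _ => ?_
        have h1 : 1 ≤ j - (i.castSucc).val := by
          have := i.isLt
          simp only [Fin.coe_castSucc]
          omega
        refine Even.mul_left ?_ _
        exact Int.even_pow.mpr ⟨even_two, by omega⟩
      simp only [Fin.val_last, Nat.sub_self, pow_zero, mul_one]
      rcases hlast with h | h <;> rw [h]
      · exact heven.add_odd odd_one
      · exact heven.add_odd ⟨-1, by ring⟩
    have hMne : M ≠ 0 := fun h => by rw [h] at hModd; exact ((Int.not_odd_iff_even.mpr Even.zero)) hModd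
    have hM1 : (1 : ℝ) ≤ |(M : ℝ)| := by
      rw [← Int.cast_abs]
      exact_mod_cast Int.one_le_abs hMne
    rw [hwx, abs_mul, abs_of_pos (by positivity : (0:ℝ) < (2:ℝ) ^ (-(j:ℤ)))]
    nlinarith [hM1, (by positivity : (0:ℝ) < (2:ℝ) ^ (-(j:ℤ)))]
  have hsq : (1 : ℝ) ≤ ∑ x, ‖w x‖ ^ 2 := by
    have hsub : hSfin.toFinset ⊆ Finset.univ := Finset.subset_univ _
    have h1 : ∑ x ∈ hSfin.toFinset, ‖w x‖ ^ 2 ≤ ∑ x, ‖w x‖ ^ 2 :=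
      Finset.sum_le_sum_of_subset_of_nonneg hsub (fun i _ _ => by positivity)
    have h2 : ∀ x ∈ hSfin.toFinset, ((2 : ℝ) ^ (-(j : ℤ))) ^ 2 ≤ ‖w x‖ ^ 2 := by
      intro x hx
      have := key x (hSfin.mem_toFinset.mp hx)
      have habs : |w x| = ‖w x‖ := (Real.norm_eq_abs _).symm
      rw [← habs]
      exact pow_le_pow_left₀ (by positivity) this 2
    have h3 : (hSfin.toFinset.card : ℝ) * ((2 : ℝ) ^ (-(j : ℤ))) ^ 2 ≤
        ∑ x ∈ hSfin.toFinset, ‖w x‖ ^ 2 := by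
      calc (hSfin.toFinset.card : ℝ) * ((2 : ℝ) ^ (-(j : ℤ))) ^ 2
          = ∑ _x ∈ hSfin.toFinset, ((2 : ℝ) ^ (-(j : ℤ))) ^ 2 := by
            rw [Finset.sum_const, nsmul_eq_mul]
        _ ≤ _ := Finset.sum_le_sum h2
    have hcard : (4 : ℝ) ^ j ≤ (hSfin.toFinset.card : ℝ) := by
      have : S.ncard = hSfin.toFinset.card := Set.ncard_eq_toFinset_card S hSfin
      exact_mod_cast this ▸ hbig
    have hval : ((2 : ℝ) ^ (-(j : ℤ))) ^ 2 = ((4 : ℝ) ^ j)⁻¹ := by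
      rw [zpow_neg, zpow_natCast, inv_pow, pow_right_comm]
      norm_num
    have h4pos : (0 : ℝ) < (4 : ℝ) ^ j := by positivity
    calc (1 : ℝ) = (4 : ℝ) ^ j * ((4 : ℝ) ^ j)⁻¹ := by field_simp
      _ ≤ (hSfin.toFinset.card : ℝ) * ((2 : ℝ) ^ (-(j : ℤ))) ^ 2 := by
          rw [hval]; exact mul_le_mul_of_nonneg_right hcard (by positivity)
      _ ≤ ∑ x ∈ hSfin.toFinset, ‖w x‖ ^ 2 := h3
      _ ≤ _ := h1
  rw [EuclideanSpace.norm_eq]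
  rw [show (1:ℝ) = Real.sqrt 1 from (Real.sqrt_one).symm]
  apply Real.sqrt_le_sqrt
  simpa using hsq
end

section
/- Let Z ⊂ R^n be the zonotope generated by m unit vectors, Q = [−1/2, 1/2]^n, and Z^{++} = Z + Q + Q. Then the number of integer points in Z + Q is at most the volume of Z^{++}, which is at most C(m + 2n, n). -/
open Pointwise

open MeasureTheory Set Pointwise

noncomputable section
namespace ZonoAux
abbrev Euc (n : ℕ) := EuclideanSpace ℝ (Fin n)



def zono {n : ℕ} {ι : Type*} [Fintype ι] (v : ι → Euc n) : Set (Euc n) :=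
  {x | ∃ lam : ι → ℝ, (∀ i, lam i ∈ Set.Icc (0:ℝ) 1) ∧ x = ∑ i, lam i • v i}

def seg {n : ℕ} (w : Euc n) : Set (Euc n) := (fun t : ℝ => t • w) '' Set.Icc 0 1

def toEuc {n : ℕ} (a : Fin n → ℝ) : Euc n := WithLp.toLp 2 a

@[simp] lemma toEuc_apply {n : ℕ} (a : Fin n → ℝ) (i : Fin n) : toEuc a i = a i := rfl


variable {n p : ℕ} {ι : Type*} [Fintype ι]

lemma zono_nonempty (v : ι → Euc n) : (zono v).Nonempty :=
  ⟨∑ i, (0:ℝ) • v i, fun _ => 0, fun _ => ⟨le_refl _, zero_le_one⟩, rfl⟩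

lemma zono_convex (v : ι → Euc n) : Convex ℝ (zono v) := by
  rintro x ⟨lam, hlam, rfl⟩ y ⟨mu, hmu, rfl⟩ a b ha hb hab
  refine ⟨fun i => a * lam i + b * mu i, fun i => ⟨add_nonneg (mul_nonneg ha (hlam i).1) (mul_nonneg hb (hmu i).1), ?_⟩, ?_⟩
  · calc a * lam i + b * mu i ≤ a * 1 + b * 1 := by
          gcongr <;> [exact (hlam i).2; exact (hmu i).2]
      _ = 1 := by linarith
  · rw [Finset.smul_sum, Finset.smul_sum, ← Finset.sum_add_distrib]
    refine Finset.sum_congr rfl fun i _ => ?_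
    rw [smul_smul, smul_smul, add_smul]

lemma zono_eq_image (v : ι → Euc n) :
    zono v = (fun lam : ι → ℝ => ∑ i, lam i • v i) '' (Set.univ.pi fun _ => Set.Icc (0:ℝ) 1) := by
  ext x
  constructor
  · rintro ⟨lam, hlam, rfl⟩; exact ⟨lam, fun i _ => hlam i, rfl⟩
  · rintro ⟨lam, hlam, rfl⟩; exact ⟨lam, fun i => hlam i (Set.mem_univ i), rfl⟩

lemma zono_compact (v : ι → Euc n) : IsCompact (zono v) := by
  rw [zono_eq_image]
  exact (isCompact_univ_pi fun _ => isCompact_Icc).image <| by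
    exact continuous_finset_sum _ fun i _ => (continuous_apply i).smul continuous_const

lemma zono_image (f : Euc n →ₗ[ℝ] Euc p) (v : ι → Euc n) :
    f '' zono v = zono (fun i => f (v i)) := by
  ext x
  constructor
  · rintro ⟨y, ⟨lam, hlam, rfl⟩, rfl⟩
    exact ⟨lam, hlam, by simp [map_sum, _root_.map_smul]⟩
  · rintro ⟨lam, hlam, rfl⟩
    exact ⟨∑ i, lam i • v i, ⟨lam, hlam, rfl⟩, by simp [map_sum, _root_.map_smul]⟩

lemma zono_reindex {ι' : Type*} [Fintype ι'] (e : ι' ≃ ι) (v : ι → Euc n) :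
    zono (v ∘ e) = zono v := by
  ext x
  constructor
  · rintro ⟨lam, hlam, rfl⟩
    refine ⟨lam ∘ e.symm, fun i => hlam _, ?_⟩
    rw [← e.sum_comp (fun i => (lam ∘ e.symm) i • v i)]
    simp
  · rintro ⟨lam, hlam, rfl⟩
    refine ⟨lam ∘ e, fun i => hlam _, ?_⟩
    rw [← e.sum_comp (fun i => lam i • v i)]
    rfl

lemma zono_split {k : ℕ} (v : Fin (k+1) → Euc n) :
    zono v = zono (v ∘ Fin.castSucc) + seg (v (Fin.last k)) := by
  ext x
  constructor
  · rintro ⟨lam, hlam, rfl⟩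
    rw [Fin.sum_univ_castSucc]
    exact ⟨∑ i : Fin k, lam i.castSucc • v i.castSucc,
      ⟨fun i => lam i.castSucc, fun i => hlam _, rfl⟩,
      lam (Fin.last k) • v (Fin.last k), ⟨lam (Fin.last k), hlam _, rfl⟩, rfl⟩
  · rintro ⟨y, ⟨lam, hlam, rfl⟩, z, ⟨t, ht, rfl⟩, rfl⟩
    refine ⟨Fin.snoc lam t, fun i => ?_, ?_⟩
    · refine Fin.lastCases ?_ (fun j => ?_) i <;> simp [Fin.snoc_last, Fin.snoc_castSucc]
      exacts [ht, hlam j]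
    · rw [Fin.sum_univ_castSucc]
      simp [Fin.snoc_last, Fin.snoc_castSucc]


variable {n : ℕ}

/-- drop the last coordinate -/
def projMap (m : ℕ) : Euc (m+1) →ₗ[ℝ] Euc m where
  toFun x := WithLp.toLp 2 (fun j => x (Fin.castSucc j) : Fin m → ℝ)
  map_add' x y := rfl
  map_smul' c x := rfl

@[simp] lemma projMap_apply (m : ℕ) (x : Euc (m+1)) (j : Fin m) :
    projMap m x j = x (Fin.castSucc j) := rfl

lemma abs_coord_le_norm (x : Euc n) (i : Fin n) : |x i| ≤ ‖x‖ := by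
  rw [EuclideanSpace.norm_eq, ← Real.sqrt_sq_eq_abs]
  refine Real.sqrt_le_sqrt ?_
  simp only [Real.norm_eq_abs, sq_abs]
  exact Finset.single_le_sum (f := fun j => x j ^ 2) (fun j _ => sq_nonneg _) (Finset.mem_univ i)

lemma norm_projMap_le (m : ℕ) (x : Euc (m+1)) : ‖projMap m x‖ ≤ ‖x‖ := by
  rw [EuclideanSpace.norm_eq, EuclideanSpace.norm_eq]
  refine Real.sqrt_le_sqrt ?_
  simp only [Real.norm_eq_abs, sq_abs]
  rw [Fin.sum_univ_castSucc (f := fun i => x i ^ 2)]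
  simp only [projMap_apply]
  exact le_add_of_nonneg_right (sq_nonneg _)

lemma sum_smul_single (a : Fin n → ℝ) :
    (∑ i, a i • EuclideanSpace.single i (1:ℝ)) = toEuc a := by
  ext j
  have : (∑ i, a i • EuclideanSpace.single i (1:ℝ)) j
      = ∑ i, (a i • EuclideanSpace.single i (1:ℝ)) j := by
    rw [WithLp.ofLp_sum]; exact Finset.sum_apply j Finset.univ (fun i => a i • EuclideanSpace.single i (1:ℝ))
  rw [this]
  simp [EuclideanSpace.single_apply]

lemma vol_add_Icc {I : Set ℝ} (hne : I.Nonempty) (hconv : Convex ℝ I)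
    (hbd : Bornology.IsBounded I) {c : ℝ} (hc : 0 ≤ c) :
    volume (I + Set.Icc 0 c) ≤ volume I + ENNReal.ofReal c := by
  set a := sInf I
  set b := sSup I
  have hba : a ≤ b := Real.sInf_le_sSup I hbd.bddBelow hbd.bddAbove
  have h1 : I + Set.Icc 0 c ⊆ Set.Icc a (b + c) := by
    rintro x ⟨s, hs, r, hr, rfl⟩
    exact ⟨le_add_of_le_of_nonneg (csInf_le hbd.bddBelow hs) hr.1,
      add_le_add (le_csSup hbd.bddAbove hs) hr.2⟩
  have h2 : Set.Ioo a b ⊆ I := by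
    intro t ht
    obtain ⟨x, hx, hxt⟩ := exists_lt_of_csInf_lt hne ht.1
    obtain ⟨y, hy, hty⟩ := exists_lt_of_lt_csSup hne ht.2
    exact hconv.ordConnected.out hx hy ⟨hxt.le, hty.le⟩
  calc volume (I + Set.Icc 0 c) ≤ volume (Set.Icc a (b + c)) := measure_mono h1
    _ = ENNReal.ofReal ((b - a) + c) := by rw [Real.volume_Icc]; ring_nf
    _ = ENNReal.ofReal (b - a) + ENNReal.ofReal c := ENNReal.ofReal_add (by linarith) hc
    _ ≤ volume I + ENNReal.ofReal c := by
        gcongr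
        calc ENNReal.ofReal (b - a) = volume (Set.Ioo a b) := (Real.volume_Ioo).symm
          _ ≤ volume I := measure_mono h2



def Phi (m : ℕ) : Euc (m+1) ≃ᵐ (ℝ × (Fin m → ℝ)) :=
  ((MeasurableEquiv.toLp 2 (Fin (m+1) → ℝ)).symm).trans
    (MeasurableEquiv.piFinSuccAbove (fun _ => ℝ) (Fin.last m))

lemma Phi_mp (m : ℕ) : MeasurePreserving (Phi m) volume volume :=
  (EuclideanSpace.volume_preserving_symm_measurableEquiv_toLp _).trans
    (volume_preserving_piFinSuccAbove (fun _ => ℝ) (Fin.last m))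

def ins (m : ℕ) (t : ℝ) (y : Fin m → ℝ) : Euc (m+1) := (Phi m).symm (t, y)

lemma ins_apply (m : ℕ) (t : ℝ) (y : Fin m → ℝ) (i : Fin (m+1)) :
    ins m t y i = Fin.snoc (α := fun _ : Fin (m+1) => ℝ) y t i := by
  have h0 : ins m t y = ((MeasurableEquiv.toLp 2 (Fin (m+1) → ℝ)).symm).symm
      ((MeasurableEquiv.piFinSuccAbove (fun _ => ℝ) (Fin.last m)).symm (t, y)) := rfl
  rw [h0]
  have h2 : (MeasurableEquiv.piFinSuccAbove (fun _ : Fin (m+1) => ℝ) (Fin.last m)).symm (t, y)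
      = Fin.snoc y t := by
    simp only [MeasurableEquiv.piFinSuccAbove, MeasurableEquiv.symm_mk,
      MeasurableEquiv.coe_mk, Equiv.symm_symm, Fin.insertNthEquiv_last]
    rfl
  rw [h2]
  simp [MeasurableEquiv.toLp_apply]

lemma ins_last (m : ℕ) (t : ℝ) (y : Fin m → ℝ) : ins m t y (Fin.last m) = t := by
  rw [ins_apply, Fin.snoc_last]

lemma ins_castSucc (m : ℕ) (t : ℝ) (y : Fin m → ℝ) (j : Fin m) :
    ins m t y (Fin.castSucc j) = y j := by
  rw [ins_apply, Fin.snoc_castSucc]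

lemma ins_add (m : ℕ) (t s : ℝ) (y : Fin m → ℝ) :
    ins m (t + s) y = ins m t y + s • EuclideanSpace.single (Fin.last m) (1:ℝ) := by
  ext i
  rw [show (ins m t y + s • EuclideanSpace.single (Fin.last m) (1:ℝ)) i
      = ins m t y i + s * EuclideanSpace.single (Fin.last m) (1:ℝ) i from rfl]
  refine Fin.lastCases ?_ (fun j => ?_) i
  · rw [ins_last, ins_last]; simp [EuclideanSpace.single_apply]
  · rw [ins_castSucc, ins_castSucc]
    simp [EuclideanSpace.single_apply, (Fin.castSucc_lt_last j).ne]

lemma projMap_ins (m : ℕ) (t : ℝ) (y : Fin m → ℝ) :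
    projMap m (ins m t y) = ((MeasurableEquiv.toLp 2 (Fin m → ℝ)).symm).symm y := by
  ext j
  rw [projMap_apply, ins_castSucc]
  simp [MeasurableEquiv.toLp_apply]

theorem step {m k : ℕ} (v : Fin k → Euc (m+1)) {c : ℝ} (hc : 0 ≤ c) :
    volume (zono v + seg (c • EuclideanSpace.single (Fin.last m) (1:ℝ))) ≤
      volume (zono v) + ENNReal.ofReal c * volume (zono fun i => projMap m (v i)) := by
  set eL := EuclideanSpace.single (Fin.last m) (1:ℝ) with heL
  set A := zono v with hA
  set B := A + seg (c • eL) with hB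
  have hAc : IsCompact A := zono_compact v
  have hsegc : IsCompact (seg (c • eL)) :=
    isCompact_Icc.image (continuous_id.smul continuous_const)
  have hBc : IsCompact B := hAc.add hsegc
  have hAconv : Convex ℝ A := zono_convex v
  set P := zono (fun i => projMap m (v i)) with hP
  have hPc : IsCompact P := zono_compact _
  have hmps : MeasurePreserving (Phi m).symm volume volume := (Phi_mp m).symm _
  set WA := (Phi m).symm ⁻¹' A with hWA
  set WB := (Phi m).symm ⁻¹' B with hWB
  have hWAm : MeasurableSet WA := (Phi m).symm.measurable hAc.measurableSet
  have hWBm : MeasurableSet WB := (Phi m).symm.measurable hBc.measurableSet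
  have hφ : MeasurePreserving ((MeasurableEquiv.toLp 2 (Fin m → ℝ)).symm).symm volume volume :=
    (EuclideanSpace.volume_preserving_symm_measurableEquiv_toLp _).symm _
  set PS := ⇑((MeasurableEquiv.toLp 2 (Fin m → ℝ)).symm).symm ⁻¹' P with hPS
  have hPSm : MeasurableSet PS :=
    ((MeasurableEquiv.toLp 2 (Fin m → ℝ)).symm).symm.measurable hPc.measurableSet
  have hmemWB : ∀ t y, (t, y) ∈ WB ↔ ins m t y ∈ B := fun _ _ => Iff.rfl
  have hprojmem : ∀ x ∈ A, projMap m x ∈ P := by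
    intro x hx
    have h := zono_image (projMap m) v
    rw [hP, ← h]
    exact Set.mem_image_of_mem _ hx
  -- pointwise slice bound
  have key : ∀ y : Fin m → ℝ, volume {t : ℝ | (t, y) ∈ WB}
      ≤ volume {t : ℝ | (t, y) ∈ WA} + PS.indicator (fun _ => ENNReal.ofReal c) y := by
    intro y
    -- decompose membership in B
    have hdec : ∀ t : ℝ, ins m t y ∈ B → ∃ s : ℝ, 0 ≤ s ∧ s ≤ c ∧ ins m (t - s) y ∈ A := by
      intro t ht
      rcases ht with ⟨xA, hxA, z, ⟨r, hr, rfl⟩, hsum⟩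
      refine ⟨r * c, mul_nonneg hr.1 hc, by nlinarith [hr.1, hr.2], ?_⟩
      have h1 : ins m ((t - r * c) + r * c) y = ins m (t - r * c) y + (r * c) • eL :=
        ins_add m _ _ y
      rw [sub_add_cancel] at h1
      have h2 : r • (c • eL) = (r * c) • eL := smul_smul r c eL
      have h4 : xA + (r * c) • eL = ins m (t - r * c) y + (r * c) • eL := by
        calc xA + (r * c) • eL = xA + r • (c • eL) := by rw [h2]
          _ = ins m t y := hsum
          _ = ins m (t - r * c) y + (r * c) • eL := h1
      have h5 : ins m (t - r * c) y = xA := (add_right_cancel h4).symm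
      rwa [h5]
    by_cases hy : y ∈ PS
    · set I := {t : ℝ | (t, y) ∈ WA} with hI
      obtain ⟨lam, hlam, hrepr⟩ := id hy
      set x := ∑ i, lam i • v i with hx
      have hxA : x ∈ A := ⟨lam, hlam, rfl⟩
      have hproj : projMap m x = ((MeasurableEquiv.toLp 2 (Fin m → ℝ)).symm).symm y := by
        rw [hrepr, hx, map_sum]
        simp [_root_.map_smul]
      have hins : ins m (x (Fin.last m)) y = x := by
        ext i
        refine Fin.lastCases ?_ (fun j => ?_) i
        · rw [ins_last]
        · rw [ins_castSucc]
          have h5 : x (Fin.castSucc j) = ((MeasurableEquiv.toLp 2 (Fin m → ℝ)).symm).symm y j := by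
            rw [← projMap_apply m x j, hproj]
          have h6 : ((MeasurableEquiv.toLp 2 (Fin m → ℝ)).symm).symm y j = y j := by
            simp [MeasurableEquiv.toLp_apply]
          rw [h5, h6]
      have hIne : I.Nonempty := ⟨x (Fin.last m), by
        show ins m (x (Fin.last m)) y ∈ A
        rw [hins]; exact hxA⟩
      have hins0 : ∀ s : ℝ, ins m s y = ins m 0 y + s • eL := by
        intro s
        have := ins_add m 0 s y
        rwa [zero_add] at this
      have hIconv : Convex ℝ I := by
        rintro t1 ht1 t2 ht2 a b ha hb hab
        show ins m (a * t1 + b * t2) y ∈ A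
        have : ins m (a * t1 + b * t2) y = a • ins m t1 y + b • ins m t2 y := by
          rw [hins0, hins0 t1, hins0 t2]
          have h1 : (a : ℝ) • (ins m 0 y + t1 • eL) + b • (ins m 0 y + t2 • eL)
              = (a + b) • ins m 0 y + (a * t1 + b * t2) • eL := by module
          rw [h1, hab, one_smul]
        rw [this]
        exact hAconv ht1 ht2 ha hb hab
      have hIbd : Bornology.IsBounded I := by
        obtain ⟨R, hR⟩ := hAc.isBounded.subset_closedBall 0
        refine (Metric.isBounded_Icc (-R) R).subset ?_
        intro t ht
        have h1 : ins m t y ∈ A := ht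
        have h2 : ‖ins m t y‖ ≤ R := by
          have := hR h1
          rwa [Metric.mem_closedBall, dist_zero_right] at this
        have h3 : |t| ≤ R := by
          have := abs_coord_le_norm (ins m t y) (Fin.last m)
          rw [ins_last] at this
          linarith
        exact abs_le.1 h3
      have hsub : {t : ℝ | (t, y) ∈ WB} ⊆ I + Set.Icc 0 c := by
        intro t ht
        obtain ⟨s, hs0, hsc, hmem⟩ := hdec t ht
        exact ⟨t - s, hmem, s, ⟨hs0, hsc⟩, by ring⟩
      calc volume {t : ℝ | (t, y) ∈ WB} ≤ volume (I + Set.Icc 0 c) := measure_mono hsub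
        _ ≤ volume I + ENNReal.ofReal c := vol_add_Icc hIne hIconv hIbd hc
        _ = volume I + PS.indicator (fun _ => ENNReal.ofReal c) y := by
            rw [Set.indicator_of_mem hy]
    · have hempty : {t : ℝ | (t, y) ∈ WB} = ∅ := by
        ext t
        simp only [Set.mem_setOf_eq, Set.mem_empty_iff_false, iff_false]
        intro ht
        obtain ⟨s, _, _, hmem⟩ := hdec t ht
        refine hy ?_
        have := hprojmem _ hmem
        rwa [projMap_ins] at this
      rw [hempty]
      simp
  -- integrate
  have hvol : ∀ (S : Set (Euc (m+1))), MeasurableSet ((Phi m).symm ⁻¹' S) →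
      volume S = ∫⁻ y, volume {t : ℝ | (t, y) ∈ (Phi m).symm ⁻¹' S} := by
    intro S hSm
    rw [← hmps.measure_preimage_equiv S, Measure.volume_eq_prod, Measure.prod_apply_symm hSm]
    rfl
  have hvolPS : volume PS = volume P := hφ.measure_preimage_equiv P
  calc volume B = ∫⁻ y, volume {t : ℝ | (t, y) ∈ WB} := hvol B hWBm
    _ ≤ ∫⁻ y, (volume {t : ℝ | (t, y) ∈ WA} + PS.indicator (fun _ => ENNReal.ofReal c) y) :=
        lintegral_mono key
    _ = (∫⁻ y, volume {t : ℝ | (t, y) ∈ WA})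
        + ∫⁻ y, PS.indicator (fun _ => ENNReal.ofReal c) y := by
        refine lintegral_add_left ?_ _
        exact measurable_measure_prodMk_right hWAm
    _ = volume A + ENNReal.ofReal c * volume P := by
        rw [← hvol A hWAm, lintegral_indicator_const hPSm, hvolPS]



theorem zono_vol_fin : ∀ (n k : ℕ) (v : Fin k → Euc n), (∀ i, ‖v i‖ ≤ 1) →
    volume (zono v) ≤ (k.choose n : ENNReal) := by
  intro n
  induction n with
  | zero =>
    intro k v _
    calc volume (zono v) ≤ volume (Set.univ : Set (Euc 0)) := measure_mono (Set.subset_univ _)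
      _ = 1 := by rw [volume_euclideanSpace_eq_dirac]; simp
      _ ≤ (k.choose 0 : ENNReal) := by simp
  | succ m ihn =>
    intro k
    induction k with
    | zero =>
      intro v _
      have hz : zono v = {(0 : Euc (m+1))} := by
        ext x
        simp only [Set.mem_singleton_iff]
        constructor
        · rintro ⟨lam, _, rfl⟩; simp
        · rintro rfl
          exact ⟨fun i => i.elim0, fun i => i.elim0, by simp⟩
      have h0 : volume ({(0 : Euc (m+1))} : Set (Euc (m+1))) = 0 := by
        have h := ((EuclideanSpace.volume_preserving_symm_measurableEquiv_toLp (Fin (m+1))).symm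
          _).measure_preimage_equiv ({0} : Set (Euc (m+1)))
        rw [← h]
        have : (⇑((MeasurableEquiv.toLp 2 (Fin (m+1) → ℝ)).symm).symm) ⁻¹' {0}
            = {((MeasurableEquiv.toLp 2 (Fin (m+1) → ℝ)).symm) 0} := by
          ext z
          constructor
          · intro hz2
            have : z = ((MeasurableEquiv.toLp 2 (Fin (m+1) → ℝ)).symm)
                (((MeasurableEquiv.toLp 2 (Fin (m+1) → ℝ)).symm).symm z) := by simp
            rw [this, hz2]; rfl
          · rintro rfl; simp
        rw [this]
        exact measure_singleton _
      rw [hz, h0]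
      exact zero_le
    | succ k ihk =>
      intro v hv
      by_cases hw : v (Fin.last k) = 0
      · have hseg : seg (v (Fin.last k)) = {(0 : Euc (m+1))} := by
          rw [hw]
          ext x
          simp only [Set.mem_singleton_iff, seg]
          constructor
          · rintro ⟨t, _, rfl⟩; simp
          · rintro rfl; exact ⟨0, ⟨le_refl _, zero_le_one⟩, by simp⟩
        have hsplit := zono_split v
        rw [hsplit, hseg, Set.add_singleton]
        simp only [add_zero, Set.image_id']
        calc volume (zono (v ∘ Fin.castSucc)) ≤ (k.choose (m+1) : ENNReal) :=
            ihk _ (fun i => hv _)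
          _ ≤ ((k+1).choose (m+1) : ENNReal) := by
            exact_mod_cast Nat.choose_le_choose (m+1) (Nat.le_succ k)
      · set w := v (Fin.last k) with hwdef
        set c := ‖w‖ with hcdef
        have hc0 : 0 < c := norm_pos_iff.2 hw
        have hc1 : c ≤ 1 := hv _
        set unit : Euc (m+1) := c⁻¹ • w with hunit
        have hunitnorm : ‖unit‖ = 1 := by
          rw [hunit, norm_smul, norm_inv, norm_norm, ← hcdef]
          field_simp
        have horth : Orthonormal ℝ
            (Set.restrict {Fin.last m} (fun _ : Fin (m+1) => unit)) := by
          constructor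
          · intro i; exact hunitnorm
          · intro i j hij
            exact absurd (Subtype.ext ((i.2 : (i : Fin (m+1)) = Fin.last m).trans
              (j.2 : (j : Fin (m+1)) = Fin.last m).symm)) hij
        obtain ⟨b, hb⟩ := horth.exists_orthonormalBasis_extension_of_card_eq
          (by simp)
        have hbv : b (Fin.last m) = unit := hb _ rfl
        set R : Euc (m+1) ≃ₗᵢ[ℝ] EuclideanSpace ℝ (Fin (m+1)) := b.repr with hRdef
        have hRw : R w = c • EuclideanSpace.single (Fin.last m) (1:ℝ) := by
          have hwc : w = c • unit := by
            rw [hunit, smul_smul]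
            rw [mul_inv_cancel₀ hc0.ne', one_smul]
          rw [hwc, _root_.map_smul, ← hbv, hRdef]
          rw [OrthonormalBasis.repr_self]
        have himg : volume (zono fun i => R (v i)) = volume (zono v) := by
          have h2 : zono (fun i => R (v i)) = ⇑R '' zono v := by
            exact (zono_image (R.toLinearIsometry.toLinearMap) v).symm
          have h3 : ⇑R '' zono v = ⇑R.symm ⁻¹' zono v := by
            ext x
            constructor
            · rintro ⟨a, ha, rfl⟩; simpa using ha
            · intro hx; exact ⟨R.symm x, hx, by simp⟩
          rw [h2, h3]
          exact (R.symm.measurePreserving).measure_preimage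
            (zono_compact v).measurableSet.nullMeasurableSet
        have hsplit : zono (fun i => R (v i)) = zono ((fun i => R (v i)) ∘ Fin.castSucc)
            + seg (c • EuclideanSpace.single (Fin.last m) (1:ℝ)) := by
          rw [zono_split (fun i => R (v i))]
          rw [show R (v (Fin.last k)) = c • EuclideanSpace.single (Fin.last m) (1:ℝ) from hRw]
        calc volume (zono v) = volume (zono fun i => R (v i)) := himg.symm
          _ = volume (zono ((fun i => R (v i)) ∘ Fin.castSucc)
              + seg (c • EuclideanSpace.single (Fin.last m) (1:ℝ))) := by rw [← hsplit]
          _ ≤ volume (zono ((fun i => R (v i)) ∘ Fin.castSucc))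
              + ENNReal.ofReal c
                * volume (zono fun j => projMap m (((fun i => R (v i)) ∘ Fin.castSucc) j)) :=
            step _ hc0.le
          _ ≤ (k.choose (m+1) : ENNReal) + 1 * (k.choose m : ENNReal) := by
            refine add_le_add (ihk _ fun i => ?_)
              (mul_le_mul' (ENNReal.ofReal_le_one.2 hc1) (ihn k _ fun i => ?_))
            · rw [Function.comp_apply, LinearIsometryEquiv.norm_map]; exact hv _
            · refine le_trans (norm_projMap_le m _) ?_
              rw [Function.comp_apply, LinearIsometryEquiv.norm_map]; exact hv _
          _ = (((k+1).choose (m+1) : ℕ) : ENNReal) := by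
            rw [one_mul, ← Nat.cast_add, Nat.choose_succ_succ k m, add_comm]

theorem zono_vol {n : ℕ} {ι : Type*} [Fintype ι] (v : ι → Euc n) (hv : ∀ i, ‖v i‖ ≤ 1) :
    volume (zono v) ≤ ((Fintype.card ι).choose n : ENNReal) := by
  rw [← zono_reindex (Fintype.equivFin ι).symm v]
  exact zono_vol_fin n _ _ (fun i => hv _)

lemma coord_add (x y : Euc n) (i : Fin n) : (x + y) i = x i + y i := rfl
lemma coord_sub (x y : Euc n) (i : Fin n) : (x - y) i = x i - y i := rfl

theorem zqq_eq {n m : ℕ} (u : Fin m → Euc n) :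
    {x : Euc n | ∃ lam : Fin m → ℝ, (∀ i, lam i ∈ Set.Icc (0:ℝ) 1) ∧ x = ∑ i, lam i • u i}
      + {x : Euc n | ∀ i, |x i| ≤ 1/2} + {x : Euc n | ∀ i, |x i| ≤ 1/2}
    = toEuc (fun _ : Fin n => (-1:ℝ)) +ᵥ
        zono (Sum.elim u (Sum.elim (fun i => EuclideanSpace.single i (1:ℝ))
          (fun i => EuclideanSpace.single i (1:ℝ)))) := by
  set H : Euc n := toEuc (fun _ : Fin n => (1/2:ℝ)) with hH
  set t₀ : Euc n := toEuc (fun _ : Fin n => (-1:ℝ)) with ht₀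
  have ht : t₀ = -(H + H) := by
    ext i
    show (-1 : ℝ) = (-(H + H)) i
    show (-1 : ℝ) = -((H + H) i)
    rw [coord_add]
    norm_num [hH]
  set w := Sum.elim u (Sum.elim (fun i => EuclideanSpace.single i (1:ℝ))
      (fun i => EuclideanSpace.single i (1:ℝ))) with hwdef
  have hsum : ∀ lam : (Fin m ⊕ (Fin n ⊕ Fin n)) → ℝ,
      ∑ i, lam i • w i = (∑ i, lam (Sum.inl i) • u i)
        + toEuc (fun i => lam (Sum.inr (Sum.inl i)))
        + toEuc (fun i => lam (Sum.inr (Sum.inr i))) := by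
    intro lam
    rw [Fintype.sum_sum_type, Fintype.sum_sum_type]
    rw [hwdef]
    simp only [Sum.elim_inl, Sum.elim_inr]
    rw [sum_smul_single (fun i => lam (Sum.inr (Sum.inl i))),
      sum_smul_single (fun i => lam (Sum.inr (Sum.inr i))), add_assoc]
  ext x
  constructor
  · rintro ⟨y, ⟨z, ⟨lam, hlam, rfl⟩, q1, hq1, rfl⟩, q2, hq2, rfl⟩
    rw [Set.mem_vadd_set]
    set lam' : (Fin m ⊕ (Fin n ⊕ Fin n)) → ℝ :=
      Sum.elim lam (Sum.elim (fun i => q1 i + 1/2) (fun i => q2 i + 1/2)) with hlam'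
    refine ⟨∑ i, lam' i • w i, ⟨lam', ?_, rfl⟩, ?_⟩
    · rintro (i | i | i)
      · exact hlam i
      · have := hq1 i; rw [Set.mem_Icc]; constructor <;>
          [skip; skip] <;> cases abs_le.1 this <;> simp [hlam'] <;> linarith
      · have := hq2 i; rw [Set.mem_Icc]; constructor <;>
          [skip; skip] <;> cases abs_le.1 this <;> simp [hlam'] <;> linarith
    · rw [hsum lam']
      
      have e2 : toEuc (fun i => lam' (Sum.inr (Sum.inl i))) = q1 + H := by
        ext i
        show q1 i + 1/2 = (q1 + H) i
        rw [coord_add]; norm_num [hH]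
      have e3 : toEuc (fun i => lam' (Sum.inr (Sum.inr i))) = q2 + H := by
        ext i
        show q2 i + 1/2 = (q2 + H) i
        rw [coord_add]; norm_num [hH]
      have e4 : ∑ i, lam' (Sum.inl i) • u i = ∑ i, lam i • u i := rfl
      rw [e2, e3, e4, ht]
      show -(H + H) + (∑ i, lam i • u i + (q1 + H) + (q2 + H))
          = ∑ i, lam i • u i + q1 + q2
      abel
  · intro hx
    rw [Set.mem_vadd_set] at hx
    obtain ⟨y, ⟨lam', hlam', rfl⟩, rfl⟩ := hx
    set z := ∑ i, lam' (Sum.inl i) • u i with hz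
    set q1 : Euc n := toEuc (fun i => lam' (Sum.inr (Sum.inl i)) - 1/2) with hq1
    set q2 : Euc n := toEuc (fun i => lam' (Sum.inr (Sum.inr i)) - 1/2) with hq2
    refine ⟨z + q1, ⟨z, ⟨lam' ∘ Sum.inl, fun i => hlam' _, rfl⟩, q1, ?_, rfl⟩, q2, ?_, ?_⟩
    · intro i
      have := hlam' (Sum.inr (Sum.inl i))
      rw [Set.mem_Icc] at this
      show |lam' (Sum.inr (Sum.inl i)) - 1/2| ≤ 1/2
      rw [abs_le]; constructor <;> linarith [this.1, this.2]
    · intro i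
      have := hlam' (Sum.inr (Sum.inr i))
      rw [Set.mem_Icc] at this
      show |lam' (Sum.inr (Sum.inr i)) - 1/2| ≤ 1/2
      rw [abs_le]; constructor <;> linarith [this.1, this.2]
    · rw [hsum lam']
      have e2 : toEuc (fun i => lam' (Sum.inr (Sum.inl i))) = q1 + H := by
        ext i
        show lam' (Sum.inr (Sum.inl i)) = (q1 + H) i
        rw [coord_add]
        show _ = lam' (Sum.inr (Sum.inl i)) - 1/2 + H i
        norm_num [hH]
      have e3 : toEuc (fun i => lam' (Sum.inr (Sum.inr i))) = q2 + H := by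
        ext i
        show lam' (Sum.inr (Sum.inr i)) = (q2 + H) i
        rw [coord_add]
        show _ = lam' (Sum.inr (Sum.inr i)) - 1/2 + H i
        norm_num [hH]
      rw [e2, e3, ht]
      show z + q1 + q2 = -(H + H) + (z + (q1 + H) + (q2 + H))
      abel

theorem card_le_vol {n : ℕ} (A : Set (Euc n)) :
    ({p : Fin n → ℤ | toEuc (fun i => (p i : ℝ)) ∈ A}.ncard : ENNReal)
      ≤ volume (A + {x : Euc n | ∀ i, |x i| ≤ 1/2}) := by
  classical
  set Qs := {x : Euc n | ∀ i, |x i| ≤ 1/2} with hQs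
  set S := {p : Fin n → ℤ | toEuc (fun i => (p i : ℝ)) ∈ A} with hS
  by_cases hfin : S.Finite
  · set C : (Fin n → ℤ) → Set (Euc n) := fun p =>
      ⇑((MeasurableEquiv.toLp 2 (Fin n → ℝ)).symm) ⁻¹'
        (Set.univ.pi fun i => Set.Ico ((p i : ℝ) - 1/2) ((p i : ℝ) + 1/2)) with hC
    have hCmem : ∀ p x, x ∈ C p ↔ ∀ i, x i ∈ Set.Ico ((p i:ℝ) - 1/2) ((p i:ℝ) + 1/2) := by
      intro p x
      simp only [hC, Set.mem_preimage, Set.mem_pi, Set.mem_univ, forall_true_left,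
        MeasurableEquiv.toLp_symm_apply]
    have hCm : ∀ p, MeasurableSet (C p) :=
      fun _ => ((MeasurableEquiv.toLp 2 (Fin n → ℝ)).symm).measurable
        (MeasurableSet.univ_pi fun _ => measurableSet_Ico)
    have hCvol : ∀ p, volume (C p) = 1 := by
      intro p
      rw [hC]
      rw [(EuclideanSpace.volume_preserving_symm_measurableEquiv_toLp (Fin n)).measure_preimage_equiv]
      rw [volume_pi_pi]
      have : ∀ i : Fin n, volume (Set.Ico ((p i:ℝ) - 1/2) ((p i:ℝ) + 1/2)) = 1 := by
        intro i
        rw [Real.volume_Ico]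
        norm_num
      simp only [this, Finset.prod_const, one_pow]
    have hCsub : ∀ p ∈ S, C p ⊆ A + Qs := by
      intro p hp x hx
      refine ⟨toEuc (fun i => (p i : ℝ)), hp, x - toEuc (fun i => (p i : ℝ)), ?_, by
        change toEuc (fun i => (p i : ℝ)) + (x - toEuc (fun i => (p i : ℝ))) = x
        rw [add_comm, sub_add_cancel]⟩
      intro i
      have h1 := (hCmem p x).1 hx i
      rw [Set.mem_Ico] at h1
      rw [coord_sub, toEuc_apply, abs_le]
      constructor <;> linarith [h1.1, h1.2]
    have hdisj : (↑hfin.toFinset : Set (Fin n → ℤ)).Pairwise (Function.onFun Disjoint C) := by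
      intro p _ q _ hpq
      rw [Function.onFun, Set.disjoint_left]
      intro x hxp hxq
      refine hpq ?_
      funext i
      have h1 := (hCmem p x).1 hxp i
      have h2 := (hCmem q x).1 hxq i
      rw [Set.mem_Ico] at h1 h2
      have habs : |((p i - q i : ℤ) : ℝ)| < 1 := by
        push_cast
        rw [abs_lt]
        constructor <;> linarith [h1.1, h1.2, h2.1, h2.2]
      have h3 : |p i - q i| < 1 := by exact_mod_cast habs
      rw [abs_lt] at h3
      omega
    calc ((S.ncard : ℕ) : ENNReal) = (hfin.toFinset.card : ENNReal) := by
          rw [Set.ncard_eq_toFinset_card S hfin]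
      _ = ∑ p ∈ hfin.toFinset, volume (C p) := by
          rw [Finset.sum_congr rfl fun p _ => hCvol p]
          simp
      _ = volume (⋃ p ∈ hfin.toFinset, C p) :=
          (measure_biUnion_finset hdisj fun p _ => hCm p).symm
      _ ≤ volume (A + Qs) := by
          refine measure_mono ?_
          intro x hx
          rw [Set.mem_iUnion₂] at hx
          obtain ⟨p, hp, hxp⟩ := hx
          exact hCsub p (hfin.mem_toFinset.1 hp) hxp
  · rw [Set.Infinite.ncard (by exact hfin)]
    simp

end ZonoAux


open ZonoAux in
/-- with `Z` the zonotope of `m` unit vectors, `Q = [-1/2,1/2]^n`,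
the number of integer points in `Z + Q` is at most `vol(Z + Q + Q)`, which is at
most `C(m + 2n, n)`. -/
theorem lattice_points_le_volume {n m : ℕ} (u : Fin m → EuclideanSpace ℝ (Fin n))
    (hu : ∀ i, ‖u i‖ = 1)
    (Z Q : Set (EuclideanSpace ℝ (Fin n)))
    (hZ : Z = {x | ∃ lam : Fin m → ℝ, (∀ i, lam i ∈ Set.Icc (0 : ℝ) 1) ∧
      x = ∑ i, lam i • u i})
    (hQ : Q = {x | ∀ i, |x i| ≤ 1 / 2}) :
    ({p : Fin n → ℤ | (WithLp.toLp 2 (fun i => (p i : ℝ)) : EuclideanSpace ℝ (Fin n)) ∈ Z + Q}.ncard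
        : ENNReal) ≤ MeasureTheory.volume (Z + Q + Q) ∧
    MeasureTheory.volume (Z + Q + Q) ≤ ((m + 2 * n).choose n : ENNReal) := by
  subst hZ hQ
  constructor
  · exact card_le_vol _
  · rw [zqq_eq u]
    set w := Sum.elim u (Sum.elim (fun i : Fin n => EuclideanSpace.single i (1:ℝ))
      (fun i : Fin n => EuclideanSpace.single i (1:ℝ))) with hw
    have h1 : (toEuc (fun _ : Fin n => (-1:ℝ))) +ᵥ zono w
        = (fun x => (-(toEuc (fun _ : Fin n => (-1:ℝ)))) + x) ⁻¹' zono w := by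
      ext x
      rw [Set.mem_preimage]
      exact Set.mem_vadd_set_iff_neg_vadd_mem
    rw [h1, measure_preimage_add]
    have hcard : Fintype.card (Fin m ⊕ (Fin n ⊕ Fin n)) = m + 2*n := by
      simp [Fintype.card_sum]
      ring
    calc volume (zono w) ≤ ((Fintype.card (Fin m ⊕ (Fin n ⊕ Fin n))).choose n : ENNReal) := by
          refine zono_vol w ?_
          rintro (i | i | i)
          · exact (hu i).le
          · rw [hw]; simp [EuclideanSpace.norm_single]
          · rw [hw]; simp [EuclideanSpace.norm_single]
      _ = ((m + 2*n).choose n : ENNReal) := by rw [hcard]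
end
end
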